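/- arXiv:1301.1025 — 7 statements merged into one kernel-verified Lean document; each statement's English description precedes it below -/
import Mathlib

section
/- For every λ > 0, 1 ≤ q < ∞, and every nonnegative measurable function f on (0,∞), one has (∫₀^∞ (t^{-λ} ∫₀^t f(s) ds)^q dt/t)^{1/q} ≤ (1/λ) (∫₀^∞ (t^{1-λ} f(t))^q dt/t)^{1/q}. -/
open MeasureTheory Set Function
open scoped ENNReal

lemma lintegralIooRpow (t c : ℝ) (ht : 0 < t) (hc : -1 < c) :
    ∫⁻ s in Ioo (0:ℝ) t, ENNReal.ofReal s ^ c = ENNReal.ofReal (t ^ (c+1) / (c+1)) := by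
  have h1 : ∫⁻ s in Ioo (0:ℝ) t, ENNReal.ofReal s ^ c
      = ∫⁻ s in Ioo (0:ℝ) t, ENNReal.ofReal (s ^ c) := by
    refine setLIntegral_congr_fun measurableSet_Ioo ?_
    intro s hs
    dsimp only
    rw [ENNReal.ofReal_rpow_of_pos hs.1]
  have hint : IntegrableOn (fun s : ℝ => s ^ c) (Ioo 0 t) := by
    have h := (intervalIntegral.intervalIntegrable_rpow' (a := 0) (b := t) hc)
    rw [intervalIntegrable_iff'] at h
    exact h.mono_set (Ioo_subset_Icc_self.trans (by rw [uIcc_of_le ht.le]))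
  have hnn : 0 ≤ᵐ[volume.restrict (Ioo (0:ℝ) t)] fun s : ℝ => s ^ c := by
    filter_upwards [ae_restrict_mem measurableSet_Ioo] with s hs
    exact Real.rpow_nonneg hs.1.le c
  rw [h1, ← ofReal_integral_eq_lintegral_ofReal hint hnn]
  congr 1
  rw [← integral_Ioc_eq_integral_Ioo, ← intervalIntegral.integral_of_le ht.le,
    integral_rpow (Or.inl hc), Real.zero_rpow (by linarith), sub_zero]

lemma lintegralIoiRpow (s c : ℝ) (hs : 0 < s) (hc : c < -1) :
    ∫⁻ t in Ioi s, ENNReal.ofReal t ^ c = ENNReal.ofReal (-s ^ (c+1) / (c+1)) := by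
  have h1 : ∫⁻ t in Ioi s, ENNReal.ofReal t ^ c
      = ∫⁻ t in Ioi s, ENNReal.ofReal (t ^ c) := by
    refine setLIntegral_congr_fun measurableSet_Ioi ?_
    intro t htt
    dsimp only
    rw [ENNReal.ofReal_rpow_of_pos (hs.trans htt)]
  have hnn : 0 ≤ᵐ[volume.restrict (Ioi s)] fun t : ℝ => t ^ c := by
    filter_upwards [ae_restrict_mem measurableSet_Ioi] with t htt
    exact Real.rpow_nonneg (hs.trans htt).le c
  rw [h1, ← ofReal_integral_eq_lintegral_ofReal (integrableOn_Ioi_rpow_of_lt hc hs) hnn]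
  congr 1
  exact integral_Ioi_rpow_of_lt hc hs

lemma lintegralSwapIoo (F G : ℝ → ℝ≥0∞) (hF : Measurable F) (hG : Measurable G) :
    (∫⁻ t in Ioi (0:ℝ), G t * ∫⁻ s in Ioo (0:ℝ) t, F s)
      = ∫⁻ s in Ioi (0:ℝ), F s * ∫⁻ t in Ioi s, G t := by
  set S : Set (ℝ × ℝ) := {p : ℝ × ℝ | 0 < p.2 ∧ p.2 < p.1} with hS
  have hSm : MeasurableSet S :=
    (measurableSet_lt measurable_const measurable_snd).inter
      (measurableSet_lt measurable_snd measurable_fst)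
  set J : ℝ → ℝ → ℝ≥0∞ := fun t s => S.indicator (fun p => G p.1 * F p.2) (t, s) with hJ
  have hJm : Measurable (uncurry J) := by
    have : uncurry J = S.indicator (fun p => G p.1 * F p.2) := rfl
    rw [this]
    exact ((hG.comp measurable_fst).mul (hF.comp measurable_snd)).indicator hSm
  have e1 : ∀ t : ℝ, G t * (∫⁻ s in Ioo (0:ℝ) t, F s) = ∫⁻ s, J t s := by
    intro t
    rw [← lintegral_indicator measurableSet_Ioo, ← lintegral_const_mul _ ((hF.indicator measurableSet_Ioo))]
    refine lintegral_congr fun s => ?_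
    by_cases h : s ∈ Ioo (0:ℝ) t
    · have h' : (t, s) ∈ S := ⟨h.1, h.2⟩
      simp [hJ, indicator_of_mem h, indicator_of_mem h']
    · have h' : (t, s) ∉ S := fun hc => h ⟨hc.1, hc.2⟩
      simp [hJ, indicator_of_notMem h, indicator_of_notMem h']
  have e2 : ∀ s : ℝ, (Ioi (0:ℝ)).indicator (fun s => F s * ∫⁻ t in Ioi s, G t) s
      = ∫⁻ t, J t s := by
    intro s
    by_cases hs : s ∈ Ioi (0:ℝ)
    · rw [indicator_of_mem hs]
      rw [← lintegral_indicator measurableSet_Ioi]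
      have : ∀ t, J t s = (Ioi s).indicator (fun t => G t) t * F s := by
        intro t
        by_cases h : t ∈ Ioi s
        · have h' : (t, s) ∈ S := ⟨hs, h⟩
          simp [hJ, indicator_of_mem h, indicator_of_mem h', mul_comm]
        · have h' : (t, s) ∉ S := fun hc => h hc.2
          simp [hJ, indicator_of_notMem h, indicator_of_notMem h']
      simp_rw [this]
      rw [lintegral_mul_const _ (hG.indicator measurableSet_Ioi), mul_comm]
    · rw [indicator_of_notMem hs]
      have : ∀ t, J t s = 0 := by
        intro t
        have h' : (t, s) ∉ S := fun hc => hs hc.1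
        simp [hJ, indicator_of_notMem h']
      simp [this]
  calc (∫⁻ t in Ioi (0:ℝ), G t * ∫⁻ s in Ioo (0:ℝ) t, F s)
      = ∫⁻ t, (Ioi (0:ℝ)).indicator (fun t => G t * ∫⁻ s in Ioo (0:ℝ) t, F s) t := by
        rw [lintegral_indicator measurableSet_Ioi]
    _ = ∫⁻ t, ∫⁻ s, J t s := by
        refine lintegral_congr fun t => ?_
        by_cases ht : t ∈ Ioi (0:ℝ)
        · rw [indicator_of_mem ht]; exact e1 t
        · rw [indicator_of_notMem ht]
          have : Ioo (0:ℝ) t = ∅ := Ioo_eq_empty (by simpa using ht)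
          rw [← e1 t, this]
          simp
    _ = ∫⁻ s, ∫⁻ t, J t s := lintegral_lintegral_swap hJm.aemeasurable
    _ = ∫⁻ s in Ioi (0:ℝ), F s * ∫⁻ t in Ioi s, G t := by
        rw [← lintegral_indicator measurableSet_Ioi]
        exact lintegral_congr fun s => (e2 s).symm


lemma keyHolder (lam q : ℝ) (hlam : 0 < lam) (hq : 1 ≤ q)
    (f : ℝ → ℝ≥0∞) (hf : Measurable f) (t : ℝ) (ht : 0 < t) :
    (∫⁻ s in Ioo (0:ℝ) t, f s)
      ≤ (∫⁻ s in Ioo (0:ℝ) t, f s ^ q * ENNReal.ofReal s ^ ((1-lam)*(q-1))) ^ (1/q)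
        * (ENNReal.ofReal t ^ lam * ENNReal.ofReal (1/lam)) ^ ((q-1)/q) := by
  rcases eq_or_lt_of_le hq with rfl | hq1
  · simp
  have hq0 : (0:ℝ) < q := lt_trans one_pos hq1
  have hq1' : q - 1 ≠ 0 := sub_ne_zero.2 (ne_of_gt hq1)
  set q' : ℝ := q / (q-1) with hq'
  have hpq : q.HolderConjugate q' := (Real.holderConjugate_iff_eq_conjExponent hq1).2 rfl
  set d : ℝ := (1-lam)*(q-1)/q with hd
  set u : ℝ → ℝ≥0∞ := fun s => f s * ENNReal.ofReal s ^ d with hu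
  set v : ℝ → ℝ≥0∞ := fun s => ENNReal.ofReal s ^ (-d) with hv
  have hum : Measurable u := hf.mul (ENNReal.measurable_ofReal.pow measurable_const)
  have hvm : Measurable v := ENNReal.measurable_ofReal.pow measurable_const
  have h1 : (∫⁻ s in Ioo (0:ℝ) t, f s) = ∫⁻ s in Ioo (0:ℝ) t, (u * v) s := by
    refine setLIntegral_congr_fun measurableSet_Ioo ?_
    intro s hs
    have hs0 : ENNReal.ofReal s ≠ 0 := (ENNReal.ofReal_pos.mpr hs.1).ne'
    simp only [Pi.mul_apply, hu, hv, mul_assoc,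
      ← ENNReal.rpow_add d (-d) hs0 ENNReal.ofReal_ne_top]
    simp
  have h2 := ENNReal.lintegral_mul_le_Lp_mul_Lq (volume.restrict (Ioo (0:ℝ) t)) hpq
    hum.aemeasurable hvm.aemeasurable
  have h3 : (∫⁻ s in Ioo (0:ℝ) t, u s ^ q)
      = ∫⁻ s in Ioo (0:ℝ) t, f s ^ q * ENNReal.ofReal s ^ ((1-lam)*(q-1)) := by
    refine lintegral_congr fun s => ?_
    rw [hu]
    rw [ENNReal.mul_rpow_of_nonneg _ _ hq0.le, ← ENNReal.rpow_mul]
    congr 2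
    rw [hd]; field_simp
  have h4 : (∫⁻ s in Ioo (0:ℝ) t, v s ^ q') = ∫⁻ s in Ioo (0:ℝ) t, ENNReal.ofReal s ^ (lam - 1) := by
    refine lintegral_congr fun s => ?_
    rw [hv, ← ENNReal.rpow_mul]
    congr 1
    rw [hd, hq']; field_simp
    ring
  have h5 : (∫⁻ s in Ioo (0:ℝ) t, ENNReal.ofReal s ^ (lam - 1))
      = ENNReal.ofReal t ^ lam * ENNReal.ofReal (1/lam) := by
    rw [lintegralIooRpow t (lam-1) ht (by linarith)]
    have : t ^ (lam - 1 + 1) / (lam - 1 + 1) = t ^ lam * (1/lam) := by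
      rw [show lam - 1 + 1 = lam by ring]; field_simp
    rw [this, ENNReal.ofReal_mul (Real.rpow_nonneg ht.le lam),
      ← ENNReal.ofReal_rpow_of_pos ht]
  have h7 : 1 / q' = (q-1)/q := by rw [hq']; rw [one_div_div]
  calc (∫⁻ s in Ioo (0:ℝ) t, f s) = ∫⁻ s in Ioo (0:ℝ) t, (u * v) s := h1
    _ ≤ (∫⁻ s in Ioo (0:ℝ) t, u s ^ q) ^ (1/q) * (∫⁻ s in Ioo (0:ℝ) t, v s ^ q') ^ (1/q') := h2
    _ = (∫⁻ s in Ioo (0:ℝ) t, f s ^ q * ENNReal.ofReal s ^ ((1-lam)*(q-1))) ^ (1/q)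
        * (ENNReal.ofReal t ^ lam * ENNReal.ofReal (1/lam)) ^ ((q-1)/q) := by
      rw [h3, h4, h5, h7]

/-- Hardy's inequality, second (dual) form. -/








theorem stmt1 (lam q : ℝ) (hlam : 0 < lam) (hq : 1 ≤ q)
    (f : ℝ → ℝ≥0∞) (hf : Measurable f) :
    (∫⁻ t in Ioi (0 : ℝ),
        (ENNReal.ofReal t ^ (-lam) * ∫⁻ s in Ioo (0 : ℝ) t, f s) ^ q
          / ENNReal.ofReal t) ^ (1 / q)
      ≤ ENNReal.ofReal (1 / lam) *
        (∫⁻ t in Ioi (0 : ℝ),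
          (ENNReal.ofReal t ^ (1 - lam) * f t) ^ q / ENNReal.ofReal t) ^ (1 / q) := by
  have hq0 : (0:ℝ) < q := lt_of_lt_of_le one_pos hq
  set c : ℝ := (1-lam)*(q-1) with hc
  set c₁ : ℝ≥0∞ := ENNReal.ofReal (1/lam) with hc₁
  have hc₁top : c₁ ≠ ⊤ := ENNReal.ofReal_ne_top
  have hC : c₁ ^ (q-1) ≠ ⊤ := ENNReal.rpow_ne_top_of_nonneg (by linarith) hc₁top
  set F : ℝ → ℝ≥0∞ := fun s => f s ^ q * ENNReal.ofReal s ^ c with hF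
  have hFm : Measurable F :=
    (hf.pow measurable_const).mul (ENNReal.measurable_ofReal.pow measurable_const)
  have hGm : Measurable fun t : ℝ => ENNReal.ofReal t ^ (-lam-1) :=
    ENNReal.measurable_ofReal.pow measurable_const
  -- pointwise bound
  have pointwise : ∀ t ∈ Ioi (0:ℝ),
      (ENNReal.ofReal t ^ (-lam) * ∫⁻ s in Ioo (0:ℝ) t, f s) ^ q / ENNReal.ofReal t
        ≤ c₁ ^ (q-1) * (ENNReal.ofReal t ^ (-lam-1) * ∫⁻ s in Ioo (0:ℝ) t, F s) := by
    intro t ht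
    rw [mem_Ioi] at ht
    set T := ENNReal.ofReal t with hT
    have hT0 : T ≠ 0 := (ENNReal.ofReal_pos.mpr ht).ne'
    have hTtop : T ≠ ⊤ := ENNReal.ofReal_ne_top
    set A : ℝ≥0∞ := ∫⁻ s in Ioo (0:ℝ) t, F s with hA
    have key := keyHolder lam q hlam hq f hf t ht
    calc (T ^ (-lam) * ∫⁻ s in Ioo (0:ℝ) t, f s) ^ q / T
        ≤ (T ^ (-lam) * (A ^ (1/q) * (T ^ lam * c₁) ^ ((q-1)/q))) ^ q / T := by
          gcongr
      _ = (T ^ (-lam*q) * T ^ (lam*(q-1)) * T ^ (-1:ℝ)) * A * c₁ ^ (q-1) := by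
          have hZ : ((T ^ lam * c₁) ^ ((q-1)/q)) ^ q = T ^ (lam*(q-1)) * c₁ ^ (q-1) := by
            rw [← ENNReal.rpow_mul, div_mul_cancel₀ _ hq0.ne',
              ENNReal.mul_rpow_of_nonneg _ _ (by linarith : (0:ℝ) ≤ q - 1),
              ← ENNReal.rpow_mul]
          have hA' : (A ^ (1/q)) ^ q = A := by
            rw [← ENNReal.rpow_mul, one_div_mul_cancel hq0.ne', ENNReal.rpow_one]
          have hT' : (T ^ (-lam)) ^ q = T ^ (-lam*q) := (ENNReal.rpow_mul T (-lam) q).symm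
          rw [div_eq_mul_inv, ENNReal.mul_rpow_of_nonneg _ _ hq0.le,
            ENNReal.mul_rpow_of_nonneg _ _ hq0.le, hZ, hA', hT', ENNReal.rpow_neg_one]
          ring
      _ = c₁ ^ (q-1) * (T ^ (-lam-1) * A) := by
          rw [← ENNReal.rpow_add _ _ hT0 hTtop, ← ENNReal.rpow_add _ _ hT0 hTtop,
            show -lam*q + lam*(q-1) + (-1:ℝ) = -lam-1 by ring]
          ring
  -- integrate
  have step1 : (∫⁻ t in Ioi (0:ℝ),
      (ENNReal.ofReal t ^ (-lam) * ∫⁻ s in Ioo (0:ℝ) t, f s) ^ q / ENNReal.ofReal t)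
      ≤ c₁ ^ (q-1) * ∫⁻ t in Ioi (0:ℝ), ENNReal.ofReal t ^ (-lam-1) * ∫⁻ s in Ioo (0:ℝ) t, F s := by
    rw [← lintegral_const_mul' _ _ hC]
    refine lintegral_mono_ae ?_
    filter_upwards [ae_restrict_mem measurableSet_Ioi] with t ht
    exact pointwise t ht
  have step2 : (∫⁻ t in Ioi (0:ℝ), ENNReal.ofReal t ^ (-lam-1) * ∫⁻ s in Ioo (0:ℝ) t, F s)
      = ∫⁻ s in Ioi (0:ℝ), F s * ∫⁻ t in Ioi s, ENNReal.ofReal t ^ (-lam-1) :=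
    lintegralSwapIoo F _ hFm hGm
  have step3 : (∫⁻ s in Ioi (0:ℝ), F s * ∫⁻ t in Ioi s, ENNReal.ofReal t ^ (-lam-1))
      = c₁ * ∫⁻ s in Ioi (0:ℝ),
          (ENNReal.ofReal s ^ (1-lam) * f s) ^ q / ENNReal.ofReal s := by
    rw [← lintegral_const_mul' _ _ hc₁top]
    refine setLIntegral_congr_fun measurableSet_Ioi ?_
    intro s hs
    rw [mem_Ioi] at hs
    set S := ENNReal.ofReal s with hSdef
    have hS0 : S ≠ 0 := (ENNReal.ofReal_pos.mpr hs).ne'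
    have hStop : S ≠ ⊤ := ENNReal.ofReal_ne_top
    have htail : (∫⁻ t in Ioi s, ENNReal.ofReal t ^ (-lam-1)) = S ^ (-lam) * c₁ := by
      rw [lintegralIoiRpow s (-lam-1) hs (by linarith),
        show -lam-1+1 = -lam by ring, neg_div_neg_eq,
        div_eq_mul_one_div, ENNReal.ofReal_mul (Real.rpow_nonneg hs.le _),
        ← ENNReal.ofReal_rpow_of_pos hs]
    dsimp only
    rw [htail, hF]
    have hR : (S ^ (1-lam) * f s) ^ q / S = f s ^ q * S ^ (c + -lam) := by
      rw [div_eq_mul_inv, ← ENNReal.rpow_neg_one S,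
        ENNReal.mul_rpow_of_nonneg _ _ hq0.le, ← ENNReal.rpow_mul,
        mul_right_comm, ← ENNReal.rpow_add _ _ hS0 hStop,
        show (1-lam)*q + (-1:ℝ) = c + -lam by rw [hc]; ring]
      ring
    rw [hR, ENNReal.rpow_add _ _ hS0 hStop]
    ring
  -- combine
  have total : (∫⁻ t in Ioi (0:ℝ),
      (ENNReal.ofReal t ^ (-lam) * ∫⁻ s in Ioo (0:ℝ) t, f s) ^ q / ENNReal.ofReal t)
      ≤ c₁ ^ q * ∫⁻ t in Ioi (0:ℝ),
          (ENNReal.ofReal t ^ (1-lam) * f t) ^ q / ENNReal.ofReal t := by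
    refine step1.trans ?_
    rw [step2, step3, ← mul_assoc]
    gcongr
    have h0 : c₁ ≠ 0 := (ENNReal.ofReal_pos.mpr (by positivity)).ne'
    calc c₁ ^ (q-1) * c₁ = c₁ ^ (q-1) * c₁ ^ (1:ℝ) := by rw [ENNReal.rpow_one]
      _ = c₁ ^ (q - 1 + 1) := (ENNReal.rpow_add _ _ h0 hc₁top).symm
      _ ≤ c₁ ^ q := by norm_num
  calc (∫⁻ t in Ioi (0:ℝ),
      (ENNReal.ofReal t ^ (-lam) * ∫⁻ s in Ioo (0:ℝ) t, f s) ^ q / ENNReal.ofReal t) ^ (1/q)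
      ≤ (c₁ ^ q * ∫⁻ t in Ioi (0:ℝ),
          (ENNReal.ofReal t ^ (1-lam) * f t) ^ q / ENNReal.ofReal t) ^ (1/q) :=
        ENNReal.rpow_le_rpow total (by positivity)
    _ = c₁ * (∫⁻ t in Ioi (0:ℝ),
          (ENNReal.ofReal t ^ (1-lam) * f t) ^ q / ENNReal.ofReal t) ^ (1/q) := by
        rw [ENNReal.mul_rpow_of_nonneg _ _ (by positivity), ← ENNReal.rpow_mul,
          mul_one_div, div_self hq0.ne', ENNReal.rpow_one]
end

section
/- Let X₀, X₁ be Banach spaces continuously embedded in a common Hausdorff topological vector space, and let f ∈ X₀ + X₁ satisfy K(f,t) → 0 as t → 0 and K(f,t)/t → 0 as t → ∞, where K(f,t) = inf{‖f₀‖_{X₀} + t‖f₁‖_{X₁} : f = f₀ + f₁}. Then for every ε > 0 there exists a sequence (f_ν)_{ν∈ℤ} in X₀ ∩ X₁ with f = Σ_ν f_ν converging in X₀ + X₁ and max(‖f_ν‖_{X₀}, 2^ν ‖f_ν‖_{X₁}) ≤ 3(1+ε) K(f, 2^ν) for every ν ∈ ℤ. -/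
open MeasureTheory Set Filter
open scoped Topology

private lemma telescope_sum {M : Type*} [AddCommGroup M] (g : ℤ → M) (N : ℕ) :
    ∑ ν ∈ Finset.Icc (-(N : ℤ)) (N : ℤ), (g ν - g (ν - 1)) = g N - g (-(N : ℤ) - 1) := by
  induction N with
  | zero => simp
  | succ n ih =>
    have h1 : Finset.Icc (-(n + 1 : ℕ) : ℤ) ((n + 1 : ℕ) : ℤ) =
        insert (-(n + 1 : ℕ) : ℤ) (insert ((n + 1 : ℕ) : ℤ) (Finset.Icc (-(n : ℕ) : ℤ) (n : ℤ))) := by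
      ext x
      simp only [Finset.mem_Icc, Finset.mem_insert]
      push_cast
      omega
    rw [h1, Finset.sum_insert, Finset.sum_insert, ih]
    · push_cast
      have e2 : ((n:ℤ) + 1 - 1) = (n:ℤ) := by ring
      rw [e2]
      abel
    · simp only [Finset.mem_Icc]; push_cast; omega
    · simp only [Finset.mem_insert, Finset.mem_Icc]; push_cast; omega

/-- The fundamental lemma of interpolation theory. -/
theorem stmt2 {E X₀ X₁ : Type*}
    [AddCommGroup E] [Module ℝ E] [TopologicalSpace E] [IsTopologicalAddGroup E]
    [ContinuousSMul ℝ E] [T2Space E]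
    [NormedAddCommGroup X₀] [NormedSpace ℝ X₀] [CompleteSpace X₀]
    [NormedAddCommGroup X₁] [NormedSpace ℝ X₁] [CompleteSpace X₁]
    (i₀ : X₀ →L[ℝ] E) (i₁ : X₁ →L[ℝ] E)
    (hi₀ : Function.Injective i₀) (hi₁ : Function.Injective i₁)
    (K : E → ℝ → ℝ)
    (hK : ∀ g t, K g t =
      sInf {r : ℝ | ∃ x₀ x₁, g = i₀ x₀ + i₁ x₁ ∧ r = ‖x₀‖ + t * ‖x₁‖})
    (f : E) (hf : ∃ x₀ x₁, f = i₀ x₀ + i₁ x₁)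
    (h0 : Tendsto (fun t => K f t) (𝓝[>] (0 : ℝ)) (𝓝 0))
    (hinf : Tendsto (fun t => K f t / t) atTop (𝓝 0))
    (ε : ℝ) (hε : 0 < ε) :
    ∃ (a : ℤ → X₀) (b : ℤ → X₁),
      (∀ ν, i₀ (a ν) = i₁ (b ν)) ∧
      Tendsto (fun N : ℕ =>
          K (f - ∑ ν ∈ Finset.Icc (-(N : ℤ)) (N : ℤ), i₀ (a ν)) 1) atTop (𝓝 0) ∧
      ∀ ν : ℤ, max ‖a ν‖ ((2 : ℝ) ^ ν * ‖b ν‖) ≤ 3 * (1 + ε) * K f ((2 : ℝ) ^ ν) := by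
  -- basic facts about K
  have hbdd : ∀ (g : E) (t : ℝ), 0 ≤ t →
      BddBelow {r : ℝ | ∃ x₀ x₁, g = i₀ x₀ + i₁ x₁ ∧ r = ‖x₀‖ + t * ‖x₁‖} := by
    intro g t ht
    refine ⟨0, ?_⟩
    rintro r ⟨x₀, x₁, -, rfl⟩
    positivity
  have hKle : ∀ (g : E) (t : ℝ), 0 ≤ t → ∀ (x₀ : X₀) (x₁ : X₁), g = i₀ x₀ + i₁ x₁ →
      K g t ≤ ‖x₀‖ + t * ‖x₁‖ := by
    intro g t ht x₀ x₁ hg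
    rw [hK]
    exact csInf_le (hbdd g t ht) ⟨x₀, x₁, hg, rfl⟩
  have hKnonneg : ∀ (g : E) (t : ℝ), 0 ≤ t → (∃ x₀ x₁, g = i₀ x₀ + i₁ x₁) → 0 ≤ K g t := by
    rintro g t ht ⟨x₀, x₁, hg⟩
    rw [hK]
    refine le_csInf ⟨_, x₀, x₁, hg, rfl⟩ ?_
    rintro r ⟨y₀, y₁, -, rfl⟩
    positivity
  -- trivial case f = 0
  by_cases hf0 : f = 0
  · refine ⟨0, 0, fun ν => by simp, ?_, ?_⟩
    · have hz : ∀ N : ℕ, K (f - ∑ ν ∈ Finset.Icc (-(N : ℤ)) (N : ℤ), i₀ ((0 : ℤ → X₀) ν)) 1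
          = 0 := by
        intro N
        have : f - ∑ ν ∈ Finset.Icc (-(N : ℤ)) (N : ℤ), i₀ ((0 : ℤ → X₀) ν) = 0 := by
          simp [hf0]
        rw [this]
        have h1 : K (0 : E) 1 ≤ ‖(0 : X₀)‖ + 1 * ‖(0 : X₁)‖ :=
          hKle 0 1 zero_le_one 0 0 (by simp)
        have h2 : (0 : ℝ) ≤ K (0 : E) 1 := hKnonneg 0 1 zero_le_one ⟨0, 0, by simp⟩
        simp at h1
        linarith
      simp only [hz]
      exact tendsto_const_nhds
    · intro ν
      have h2 : (0 : ℝ) ≤ K f ((2:ℝ)^ν) := hKnonneg f _ (by positivity) hf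
      simp only [Pi.zero_apply, norm_zero, mul_zero, max_self]
      nlinarith
  -- K f t > 0 for t > 0
  have hKpos : ∀ t : ℝ, 0 < t → 0 < K f t := by
    intro t ht
    rcases lt_or_eq_of_le (hKnonneg f t ht.le hf) with h | h
    · exact h
    exfalso
    -- K f t = 0 : build sequences tending to 0
    have hex : ∀ n : ℕ, ∃ (x₀ : X₀) (x₁ : X₁), f = i₀ x₀ + i₁ x₁ ∧
        ‖x₀‖ + t * ‖x₁‖ < 1 / (n + 1) := by
      intro n
      have hlt : sInf {r : ℝ | ∃ x₀ x₁, f = i₀ x₀ + i₁ x₁ ∧ r = ‖x₀‖ + t * ‖x₁‖}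
          < 1 / (n + 1) := by
        rw [← hK, ← h]; positivity
      obtain ⟨x₀, x₁, hg⟩ := hf
      have hne : Set.Nonempty {r : ℝ | ∃ x₀ x₁, f = i₀ x₀ + i₁ x₁ ∧ r = ‖x₀‖ + t * ‖x₁‖} :=
        ⟨_, x₀, x₁, hg, rfl⟩
      obtain ⟨r, ⟨y₀, y₁, hgy, rfl⟩, hr⟩ := exists_lt_of_csInf_lt hne hlt
      exact ⟨y₀, y₁, hgy, hr⟩
    choose u v huv hsmall using hex
    have hu : Tendsto u atTop (𝓝 0) := by
      rw [tendsto_zero_iff_norm_tendsto_zero]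
      refine squeeze_zero (fun n => norm_nonneg _)
        (fun n => (le_add_of_nonneg_right (by positivity)).trans (hsmall n).le)
        tendsto_one_div_add_atTop_nhds_zero_nat
    have hv : Tendsto v atTop (𝓝 0) := by
      rw [tendsto_zero_iff_norm_tendsto_zero]
      have hlim2 : Tendsto (fun n : ℕ => 1 / t * (1 / (n + 1) : ℝ)) atTop (𝓝 0) := by
        simpa using tendsto_one_div_add_atTop_nhds_zero_nat.const_mul (1 / t)
      refine squeeze_zero (fun n => norm_nonneg _) (fun n => ?_) hlim2
      have h1 : t * ‖v n‖ ≤ 1 / (n + 1) :=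
        (le_add_of_nonneg_left (norm_nonneg _)).trans (hsmall n).le
      calc ‖v n‖ = 1 / t * (t * ‖v n‖) := by field_simp
        _ ≤ 1 / t * (1 / (n + 1)) := by
            exact mul_le_mul_of_nonneg_left h1 (by positivity)
    have hlim : Tendsto (fun n => i₀ (u n) + i₁ (v n)) atTop (𝓝 (0 : E)) := by
      have := ((i₀.continuous.tendsto 0).comp hu).add ((i₁.continuous.tendsto 0).comp hv)
      simpa using this
    have : Tendsto (fun _ : ℕ => f) atTop (𝓝 (0 : E)) := by
      refine hlim.congr fun n => (huv n).symm
    exact hf0 (tendsto_nhds_unique tendsto_const_nhds this)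
  -- choose near-optimal decompositions
  have hchoice : ∀ ν : ℤ, ∃ (x₀ : X₀) (x₁ : X₁), f = i₀ x₀ + i₁ x₁ ∧
      ‖x₀‖ + (2:ℝ)^ν * ‖x₁‖ ≤ (1 + ε) * K f ((2:ℝ)^ν) := by
    intro ν
    have hp : (0:ℝ) < (2:ℝ)^ν := by positivity
    have hKp := hKpos _ hp
    have hlt : sInf {r : ℝ | ∃ x₀ x₁, f = i₀ x₀ + i₁ x₁ ∧ r = ‖x₀‖ + (2:ℝ)^ν * ‖x₁‖}
        < (1 + ε) * K f ((2:ℝ)^ν) := by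
      rw [← hK]; nlinarith
    obtain ⟨x₀, x₁, hg⟩ := hf
    have hne : Set.Nonempty {r : ℝ | ∃ x₀ x₁, f = i₀ x₀ + i₁ x₁ ∧ r = ‖x₀‖ + (2:ℝ)^ν * ‖x₁‖} :=
      ⟨_, x₀, x₁, hg, rfl⟩
    obtain ⟨r, ⟨y₀, y₁, hgy, rfl⟩, hr⟩ := exists_lt_of_csInf_lt hne hlt
    exact ⟨y₀, y₁, hgy, hr.le⟩
  choose x₀ x₁ hx hxb using hchoice
  have hKmono : ∀ ν : ℤ, K f ((2:ℝ)^(ν-1)) ≤ K f ((2:ℝ)^ν) := by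
    intro ν
    rw [hK f ((2:ℝ)^ν)]
    refine le_csInf ⟨_, x₀ ν, x₁ ν, hx ν, rfl⟩ ?_
    rintro r ⟨y₀, y₁, hgy, rfl⟩
    have h1 : K f ((2:ℝ)^(ν-1)) ≤ ‖y₀‖ + (2:ℝ)^(ν-1) * ‖y₁‖ :=
      hKle f _ (by positivity) y₀ y₁ hgy
    have h2 : (2:ℝ)^(ν-1) ≤ (2:ℝ)^ν :=
      zpow_le_zpow_right₀ one_le_two (by omega)
    nlinarith [norm_nonneg y₁]
  refine ⟨fun ν => x₀ ν - x₀ (ν - 1), fun ν => x₁ (ν - 1) - x₁ ν, ?_, ?_, ?_⟩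
  · intro ν
    rw [map_sub, map_sub, sub_eq_sub_iff_add_eq_add, ← hx ν]
    exact (hx (ν - 1)).trans (add_comm _ _)
  · -- convergence
    have hsum : ∀ N : ℕ, ∑ ν ∈ Finset.Icc (-(N : ℤ)) (N : ℤ), i₀ (x₀ ν - x₀ (ν - 1))
        = i₀ (x₀ (N : ℤ)) - i₀ (x₀ (-(N : ℤ) - 1)) := by
      intro N
      have := telescope_sum (fun ν => i₀ (x₀ ν)) N
      simpa [map_sub] using this
    have hrem : ∀ N : ℕ, f - ∑ ν ∈ Finset.Icc (-(N : ℤ)) (N : ℤ), i₀ (x₀ ν - x₀ (ν - 1))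
        = i₀ (x₀ (-(N : ℤ) - 1)) + i₁ (x₁ (N : ℤ)) := by
      intro N
      rw [hsum N, hx (N : ℤ)]
      abel
    have hb1 : ∀ N : ℕ, K (f - ∑ ν ∈ Finset.Icc (-(N : ℤ)) (N : ℤ), i₀ (x₀ ν - x₀ (ν - 1))) 1
        ≤ (1 + ε) * K f ((2:ℝ)^(-(N:ℤ)-1)) + (1 + ε) * (K f ((2:ℝ)^(N:ℤ)) / (2:ℝ)^(N:ℤ)) := by
      intro N
      have h1 : K (f - ∑ ν ∈ Finset.Icc (-(N : ℤ)) (N : ℤ), i₀ (x₀ ν - x₀ (ν - 1))) 1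
          ≤ ‖x₀ (-(N : ℤ) - 1)‖ + 1 * ‖x₁ (N : ℤ)‖ :=
        hKle _ 1 zero_le_one _ _ (hrem N)
      have h2 := hxb (-(N:ℤ)-1)
      have h3 := hxb (N:ℤ)
      have hp1 : (0:ℝ) < (2:ℝ)^(-(N:ℤ)-1) := by positivity
      have hp2 : (0:ℝ) < (2:ℝ)^(N:ℤ) := by positivity
      have h4 : ‖x₀ (-(N:ℤ)-1)‖ ≤ (1 + ε) * K f ((2:ℝ)^(-(N:ℤ)-1)) := by
        nlinarith [norm_nonneg (x₁ (-(N:ℤ)-1))]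
      have h5 : ‖x₁ (N:ℤ)‖ ≤ (1 + ε) * (K f ((2:ℝ)^(N:ℤ)) / (2:ℝ)^(N:ℤ)) := by
        rw [mul_div_assoc'] at *
        rw [le_div_iff₀ hp2]
        nlinarith [norm_nonneg (x₀ (N:ℤ))]
      linarith
    refine squeeze_zero (fun N => hKnonneg _ 1 zero_le_one ⟨_, _, hrem N⟩) hb1 ?_
    have t1 : Tendsto (fun N : ℕ => K f ((2:ℝ)^(-(N:ℤ)-1))) atTop (𝓝 0) := by
      refine h0.comp ?_
      rw [tendsto_nhdsWithin_iff]
      constructor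
      · have : ∀ N : ℕ, (2:ℝ)^(-(N:ℤ)-1) = (1/2:ℝ)^(N+1) := by
          intro N
          have hp : (0:ℝ) < (2:ℝ)^(N+1) := by positivity
          have h1 : ((1:ℝ)/2)^(N+1) * (2:ℝ)^(N+1) = 1 := by
            rw [← mul_pow]; norm_num
          have h2 : (2:ℝ)^(-(N:ℤ)-1) * (2:ℝ)^(N+1) = 1 := by
            rw [← zpow_natCast (2:ℝ) (N+1), ← zpow_add₀ (two_ne_zero : (2:ℝ) ≠ 0)]
            have he : (-(N:ℤ)-1) + ((N+1:ℕ):ℤ) = 0 := by push_cast; ring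
            rw [he, zpow_zero]
          exact mul_right_cancel₀ hp.ne' (h2.trans h1.symm)
        simp only [this]
        exact (tendsto_pow_atTop_nhds_zero_of_lt_one (by norm_num) (by norm_num)).comp
          (tendsto_add_atTop_nat 1)
      · exact Eventually.of_forall fun N => Set.mem_Ioi.mpr (by positivity)
    have t2 : Tendsto (fun N : ℕ => K f ((2:ℝ)^(N:ℤ)) / (2:ℝ)^(N:ℤ)) atTop (𝓝 0) := by
      refine hinf.comp ?_
      have : ∀ N : ℕ, (2:ℝ)^(N:ℤ) = (2:ℝ)^N := fun N => zpow_natCast 2 N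
      simp only [this]
      exact tendsto_pow_atTop_atTop_of_one_lt one_lt_two
    have := (t1.const_mul (1+ε)).add (t2.const_mul (1+ε))
    simpa using this
  · -- the bounds
    intro ν
    have h1 := hxb ν
    have h2 := hxb (ν - 1)
    have h3 := hKmono ν
    have hKnn : (0:ℝ) ≤ K f ((2:ℝ)^ν) := hKnonneg f _ (by positivity) hf
    have hp1 : (0:ℝ) < (2:ℝ)^(ν-1) := by positivity
    have hp2 : (0:ℝ) < (2:ℝ)^ν := by positivity
    have h2p : (2:ℝ)^ν = 2 * (2:ℝ)^(ν-1) := by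
      rw [mul_comm, ← zpow_add_one₀ (two_ne_zero : (2:ℝ) ≠ 0)]
      congr 1
      ring
    have n0 := norm_nonneg (x₀ ν); have n1 := norm_nonneg (x₀ (ν-1))
    have n2 := norm_nonneg (x₁ ν); have n3 := norm_nonneg (x₁ (ν-1))
    have hε1 : (0:ℝ) ≤ 1 + ε := by linarith
    have hmm := mul_le_mul_of_nonneg_left h3 hε1
    have hq2 : (0:ℝ) ≤ (2:ℝ)^ν * ‖x₁ ν‖ := by positivity
    have hq3 : (0:ℝ) ≤ (2:ℝ)^(ν-1) * ‖x₁ (ν-1)‖ := by positivity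
    have hKK : (0:ℝ) ≤ (1+ε) * K f ((2:ℝ)^ν) := mul_nonneg hε1 hKnn
    have e1 : (2:ℝ)^(ν-1) * ‖x₁ (ν-1)‖ ≤ (1+ε) * K f ((2:ℝ)^ν) := by linarith
    have e1' : (2:ℝ)^ν * ‖x₁ (ν-1)‖ ≤ 2 * ((1+ε) * K f ((2:ℝ)^ν)) := by
      have ha : (2:ℝ)^ν * ‖x₁ (ν-1)‖ = 2 * ((2:ℝ)^(ν-1) * ‖x₁ (ν-1)‖) := by
        rw [h2p]; ring
      have hb := mul_le_mul_of_nonneg_left e1 (by norm_num : (0:ℝ) ≤ 2)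
      linarith
    have e2 : (2:ℝ)^ν * ‖x₁ ν‖ ≤ (1+ε) * K f ((2:ℝ)^ν) := by linarith
    refine max_le ?_ ?_
    · calc ‖x₀ ν - x₀ (ν-1)‖ ≤ ‖x₀ ν‖ + ‖x₀ (ν-1)‖ := norm_sub_le _ _
        _ ≤ 3 * (1 + ε) * K f ((2:ℝ)^ν) := by linarith
    · calc (2:ℝ)^ν * ‖x₁ (ν-1) - x₁ ν‖ ≤ (2:ℝ)^ν * (‖x₁ (ν-1)‖ + ‖x₁ ν‖) :=
          mul_le_mul_of_nonneg_left (norm_sub_le _ _) hp2.le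
        _ ≤ 3 * (1 + ε) * K f ((2:ℝ)^ν) := by rw [mul_add]; linarith
end

section
/- For every f ∈ L¹ + L^∞ on a measure space and every t > 0, K(f, t, L¹, L^∞) = ∫₀^t f*(s) ds, where K(f,t) = inf{‖f₀‖₁ + t‖f₁‖_∞ : f = f₀ + f₁} and f* is the non-increasing rearrangement of f. -/
open MeasureTheory Set
open scoped ENNReal

lemma lintegral_shift_aux (g : ℝ → ℝ≥0∞) (hg : Measurable g) (c : ℝ) :
    ∫⁻ u in Ioi c, g (u - c) = ∫⁻ v in Ioi (0:ℝ), g v := by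
  have hp : MeasurePreserving (fun v : ℝ => v + c)
      (volume.restrict (Ioi (0:ℝ))) (volume.restrict (Ioi c)) := by
    have h := (measurePreserving_add_right volume c).restrict_preimage
      (measurableSet_Ioi (a := c))
    have he : (fun v : ℝ => v + c) ⁻¹' Ioi c = Ioi 0 := by
      ext v; simp
    rwa [he] at h
  have := hp.lintegral_comp (f := fun u => g (u - c))
    (hg.comp (measurable_id.sub_const c))
  simpa using this.symm


/-- The K-functional of the couple `(L¹, L∞)` equals the integral of the
non-increasing rearrangement: `K(f, t, L¹, L∞) = ∫₀^t f*(s) ds`. -/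
theorem stmt3 {α : Type*} [MeasurableSpace α] (μ : Measure α) (f : α → ℝ)
    (hf : ∃ f₀ f₁ : α → ℝ, f = f₀ + f₁ ∧ MemLp f₀ 1 μ ∧ MemLp f₁ ∞ μ)
    (t : ℝ) (ht : 0 < t) :
    sInf {r : ℝ | ∃ f₀ f₁ : α → ℝ, f = f₀ + f₁ ∧ MemLp f₀ 1 μ ∧ MemLp f₁ ∞ μ ∧
        r = (eLpNorm f₀ 1 μ).toReal + t * (eLpNorm f₁ ∞ μ).toReal}
      = ∫ s in Ioo (0 : ℝ) t,
          sInf {u : ℝ | 0 ≤ u ∧ μ {x | u < |f x|} ≤ ENNReal.ofReal s} := by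
  classical
  obtain ⟨g₀, g₁, hgsum, hg₀, hg₁⟩ := hf
  set d : ℝ → ℝ≥0∞ := fun u => μ {x | u < |f x|} with hd_def
  set G : ℝ → ℝ := fun s => sInf {u : ℝ | 0 ≤ u ∧ d u ≤ ENNReal.ofReal s} with hG_def
  show sInf {r : ℝ | ∃ f₀ f₁ : α → ℝ, f = f₀ + f₁ ∧ MemLp f₀ 1 μ ∧ MemLp f₁ ∞ μ ∧
        r = (eLpNorm f₀ 1 μ).toReal + t * (eLpNorm f₁ ∞ μ).toReal}
      = ∫ s in Ioo (0 : ℝ) t, G s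
  -- measurability of f
  have hfaesm : AEStronglyMeasurable f μ := hgsum ▸ hg₀.1.add hg₁.1
  have hfae : AEMeasurable f μ := hfaesm.aemeasurable
  have habs : ∀ {g : α → ℝ}, AEMeasurable g μ → AEMeasurable (fun x => |g x|) μ :=
    fun h => continuous_abs.measurable.comp_aemeasurable h
  set F : α → ℝ := fun x => |hfae.mk f x| with hF_def
  have hFmeas : Measurable F := hfae.measurable_mk.abs
  have hdF : ∀ u, d u = μ {x | u < F x} := by
    intro u
    apply measure_congr
    filter_upwards [hfae.ae_eq_mk] with x hx
    show (u < |f x|) = (u < F x)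
    rw [hF_def]; simp only [hx]
  -- antitonicity of d
  have hd_anti : Antitone d := fun u v huv =>
    measure_mono fun x hx => lt_of_le_of_lt huv hx
  have hd_meas : Measurable d := hd_anti.measurable
  -- right continuity of d
  have hd_rc : ∀ c : ℝ, ∀ b : ℝ≥0∞, (∀ n : ℕ, d (c + 1/(n+1)) ≤ b) → d c ≤ b := by
    intro c b hb
    have hU : {x | c < F x} = ⋃ n : ℕ, {x | c + 1/((n:ℝ)+1) < F x} := by
      ext x
      simp only [mem_iUnion, mem_setOf_eq]
      constructor
      · intro h
        obtain ⟨n, hn⟩ := exists_nat_one_div_lt (sub_pos.2 h)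
        exact ⟨n, by push_cast at hn ⊢; linarith⟩
      · rintro ⟨n, hn⟩
        have h1 : (0:ℝ) < 1/((n:ℝ)+1) := by positivity
        linarith
    have hmono : Monotone (fun n : ℕ => {x | c + 1/((n:ℝ)+1) < F x}) := by
      intro m n hmn x hx
      simp only [mem_setOf_eq] at hx ⊢
      have h1 : 1/((n:ℝ)+1) ≤ 1/((m:ℝ)+1) := by
        apply one_div_le_one_div_of_le (by positivity)
        have : (m:ℝ) ≤ (n:ℝ) := Nat.cast_le.2 hmn
        linarith
      linarith
    have hdir : Directed (· ⊆ ·) (fun n : ℕ => {x | c + 1/((n:ℝ)+1) < F x}) :=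
      hmono.directed_le
    rw [hdF, hU, Directed.measure_iUnion hdir]
    exact iSup_le fun n => by rw [← hdF]; exact hb n
  -- splitting estimate
  have hsplit : ∀ f₀ f₁ : α → ℝ, f = f₀ + f₁ → MemLp f₁ ∞ μ →
      ∀ u : ℝ, d u ≤ μ {x | u - (eLpNorm f₁ ∞ μ).toReal < |f₀ x|} := by
    intro f₀ f₁ hsum' h₁ u
    set M' := (eLpNorm f₁ ∞ μ).toReal with hM'
    have hfin : eLpNormEssSup f₁ μ ≠ ∞ := by
      rw [← eLpNorm_exponent_top]; exact h₁.2.ne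
    have hae : ∀ᵐ x ∂μ, |f₁ x| ≤ M' := by
      filter_upwards [ae_le_eLpNormEssSup (f := f₁) (μ := μ)] with x hx
      have := ENNReal.toReal_mono hfin hx
      rw [toReal_enorm, Real.norm_eq_abs] at this
      rw [hM', eLpNorm_exponent_top]
      exact this
    have hnull : μ {x | M' < |f₁ x|} = 0 := by
      have := hae
      rw [MeasureTheory.ae_iff] at this
      simpa only [not_le] using this
    calc d u ≤ μ ({x | u - M' < |f₀ x|} ∪ {x | M' < |f₁ x|}) := by
          apply measure_mono
          intro x hx
          simp only [mem_setOf_eq, mem_union] at hx ⊢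
          by_cases h : |f₁ x| ≤ M'
          · left
            have hfx : f₀ x = f x - f₁ x := by
              have := congrFun hsum' x
              simp only [Pi.add_apply] at this
              linarith
            have habs : |f x| - |f₁ x| ≤ |f₀ x| := by
              rw [hfx]; exact abs_sub_abs_le_abs_sub _ _
            linarith
          · right; exact not_le.1 h
      _ ≤ μ {x | u - M' < |f₀ x|} + μ {x | M' < |f₁ x|} := measure_union_le _ _
      _ = μ {x | u - M' < |f₀ x|} := by rw [hnull, add_zero]
  -- nonemptiness of the defining sets
  have hSne : ∀ s : ℝ, 0 < s → ∃ u, 0 ≤ u ∧ d u ≤ ENNReal.ofReal s := by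
    intro s hs
    set N := ∫⁻ x, ENNReal.ofReal |g₀ x| ∂μ with hN
    have hNeq : N = eLpNorm g₀ 1 μ := by
      rw [eLpNorm_one_eq_lintegral_enorm, hN]
      exact lintegral_congr fun x => (Real.enorm_eq_ofReal_abs _).symm
    have hNfin : N ≠ ∞ := by rw [hNeq]; exact hg₀.2.ne
    set v := N.toReal / s + 1 with hv_def
    have hv : 0 < v := by positivity
    refine ⟨(eLpNorm g₁ ∞ μ).toReal + v, by positivity, ?_⟩
    have h1 : d ((eLpNorm g₁ ∞ μ).toReal + v) ≤ μ {x | v < |g₀ x|} := by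
      have := hsplit g₀ g₁ hgsum hg₁ ((eLpNorm g₁ ∞ μ).toReal + v)
      simpa using this
    refine h1.trans ?_
    have h2 : μ {x | v < |g₀ x|} ≤ μ {x | ENNReal.ofReal v ≤ ENNReal.ofReal |g₀ x|} := by
      apply measure_mono
      intro x hx
      exact ENNReal.ofReal_le_ofReal (le_of_lt hx)
    refine h2.trans ?_
    have h3 := meas_ge_le_lintegral_div (μ := μ)
      (f := fun x => ENNReal.ofReal |g₀ x|)
      (ENNReal.measurable_ofReal.comp_aemeasurable (habs hg₀.1.aemeasurable))
      (ε := ENNReal.ofReal v) (by simp [hv]) ENNReal.ofReal_ne_top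
    refine h3.trans ?_
    rw [← hN]
    rw [ENNReal.div_le_iff (by simp [hv]) ENNReal.ofReal_ne_top]
    calc N = ENNReal.ofReal N.toReal := (ENNReal.ofReal_toReal hNfin).symm
      _ ≤ ENNReal.ofReal (s * v) := by
          apply ENNReal.ofReal_le_ofReal
          have hsv : s * v = N.toReal + s := by
            rw [hv_def]; field_simp
          linarith [hs.le]
      _ = ENNReal.ofReal s * ENNReal.ofReal v := ENNReal.ofReal_mul hs.le
  -- G properties
  have hG_nonneg : ∀ s, 0 ≤ G s := fun s => Real.sInf_nonneg fun u hu => hu.1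
  have hbddS : ∀ s : ℝ, BddBelow {u : ℝ | 0 ≤ u ∧ d u ≤ ENNReal.ofReal s} :=
    fun s => ⟨0, fun u hu => hu.1⟩
  have hG_mem : ∀ s, 0 < s → d (G s) ≤ ENNReal.ofReal s := by
    intro s hs
    obtain ⟨u₀, hu₀⟩ := hSne s hs
    apply hd_rc
    intro n
    have hlt : G s < G s + 1/((n:ℝ)+1) := by
      have : (0:ℝ) < 1/((n:ℝ)+1) := by positivity
      linarith
    obtain ⟨u, hu, hult⟩ := exists_lt_of_csInf_lt ⟨u₀, hu₀⟩ hlt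
    exact (hd_anti hult.le).trans hu.2
  have hG_iff : ∀ s, 0 < s → ∀ u, 0 ≤ u → (d u ≤ ENNReal.ofReal s ↔ G s ≤ u) := by
    intro s hs u hu
    constructor
    · intro h; exact csInf_le (hbddS s) ⟨hu, h⟩
    · intro h; exact (hd_anti h).trans (hG_mem s hs)
  have hG_anti : AntitoneOn G (Ioi (0:ℝ)) := by
    intro s₁ hs₁ s₂ _ h12
    apply csInf_le_csInf (hbddS s₂) (hSne s₁ hs₁)
    intro u hu
    exact ⟨hu.1, hu.2.trans (ENNReal.ofReal_le_ofReal h12)⟩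
  -- the main lintegral
  set I : ℝ≥0∞ := ∫⁻ s in Ioo (0:ℝ) t, ENNReal.ofReal (G s) with hI_def
  have hGaemeas : AEMeasurable G (volume.restrict (Ioo (0:ℝ) t)) := by
    have h := aemeasurable_restrict_of_antitoneOn measurableSet_Ioi hG_anti
      (μ := volume)
    exact h.mono_measure (Measure.restrict_mono Ioo_subset_Ioi_self le_rfl)
  have hI_eq : I = ∫⁻ u in Ioi (0:ℝ), min (ENNReal.ofReal t) (d u) := by
    rw [hI_def, lintegral_eq_lintegral_meas_lt _
      (Filter.Eventually.of_forall fun s => hG_nonneg s) hGaemeas]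
    refine setLIntegral_congr_fun measurableSet_Ioi
      (fun u hu => ?_)
    rw [Measure.restrict_apply' measurableSet_Ioo]
    have hset : {s | u < G s} ∩ Ioo 0 t = {s | ENNReal.ofReal s < d u} ∩ Ioo 0 t := by
      ext s
      simp only [mem_inter_iff, mem_setOf_eq, mem_Ioo, and_congr_left_iff]
      rintro ⟨hs0, _⟩
      rw [← not_le, ← not_le, not_iff_not]
      exact (hG_iff s hs0 u hu.le).symm
    rw [hset]
    rcases eq_or_ne (d u) ∞ with hdu | hdu
    · have : {s : ℝ | ENNReal.ofReal s < d u} ∩ Ioo 0 t = Ioo 0 t := by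
        apply inter_eq_right.2
        intro s _
        simp [hdu, ENNReal.ofReal_lt_top]
      rw [this, Real.volume_Ioo, hdu]
      simp [min_eq_left, le_top]
    · have : {s : ℝ | ENNReal.ofReal s < d u} ∩ Ioo 0 t = Ioo 0 (min ((d u).toReal) t) := by
        ext s
        simp only [mem_inter_iff, mem_setOf_eq, mem_Ioo, lt_min_iff]
        constructor
        · rintro ⟨h1, h2, h3⟩
          exact ⟨h2, (ENNReal.ofReal_lt_iff_lt_toReal h2.le hdu).1 h1, h3⟩
        · rintro ⟨h1, h2, h3⟩
          exact ⟨(ENNReal.ofReal_lt_iff_lt_toReal h1.le hdu).2 h2, h1, h3⟩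
      rw [this, Real.volume_Ioo, sub_zero]
      rcases le_total ((d u).toReal) t with h | h
      · rw [min_eq_left h, ENNReal.ofReal_toReal hdu,
          min_eq_right ((ENNReal.ofReal_toReal hdu) ▸ ENNReal.ofReal_le_ofReal h)]
      · rw [min_eq_right h, min_eq_left]
        rw [← ENNReal.ofReal_toReal hdu]
        exact ENNReal.ofReal_le_ofReal h
  -- upper bound for arbitrary decompositions
  have hKey : ∀ f₀ f₁ : α → ℝ, f = f₀ + f₁ → MemLp f₀ 1 μ → MemLp f₁ ∞ μ →
      I ≤ eLpNorm f₀ 1 μ + ENNReal.ofReal t * eLpNorm f₁ ∞ μ := by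
    intro f₀ f₁ hsum' h₀ h₁
    set M' := (eLpNorm f₁ ∞ μ).toReal with hM'
    have hM'0 : 0 ≤ M' := ENNReal.toReal_nonneg
    set d₀ : ℝ → ℝ≥0∞ := fun v => μ {x | v < |f₀ x|} with hd₀
    have hd₀anti : Antitone d₀ := fun u v huv =>
      measure_mono fun x hx => lt_of_le_of_lt huv hx
    have hd₀meas : Measurable d₀ := hd₀anti.measurable
    have hlayer₀ : ∫⁻ v in Ioi (0:ℝ), d₀ v = eLpNorm f₀ 1 μ := by
      rw [eLpNorm_one_eq_lintegral_enorm]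
      rw [← lintegral_eq_lintegral_meas_lt μ
        (Filter.Eventually.of_forall fun x => abs_nonneg (f₀ x)) (habs h₀.1.aemeasurable)]
      exact lintegral_congr fun x => (Real.enorm_eq_ofReal_abs _).symm
    rw [hI_eq]
    have hsplit2 : Ioc (0:ℝ) M' ∪ Ioi M' = Ioi 0 := Ioc_union_Ioi_eq_Ioi hM'0
    calc ∫⁻ u in Ioi (0:ℝ), min (ENNReal.ofReal t) (d u)
        = (∫⁻ u in Ioc (0:ℝ) M', min (ENNReal.ofReal t) (d u))
          + ∫⁻ u in Ioi M', min (ENNReal.ofReal t) (d u) := by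
          rw [← lintegral_union measurableSet_Ioi (Ioc_disjoint_Ioi le_rfl), hsplit2]
      _ ≤ ENNReal.ofReal t * ENNReal.ofReal M' + ∫⁻ u in Ioi M', d₀ (u - M') := by
          refine add_le_add ?_ ?_
          · calc (∫⁻ u in Ioc (0:ℝ) M', min (ENNReal.ofReal t) (d u))
                ≤ ∫⁻ _ in Ioc (0:ℝ) M', ENNReal.ofReal t :=
                  lintegral_mono fun u => min_le_left _ _
              _ = ENNReal.ofReal t * ENNReal.ofReal M' := by
                  rw [setLIntegral_const, Real.volume_Ioc, sub_zero]
          · refine lintegral_mono_ae ((ae_restrict_iff' measurableSet_Ioi).2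
              (Filter.Eventually.of_forall fun u hu => ?_))
            exact (min_le_right _ _).trans (hsplit f₀ f₁ hsum' h₁ u)
      _ = ENNReal.ofReal t * ENNReal.ofReal M' + ∫⁻ v in Ioi (0:ℝ), d₀ v := by
          rw [lintegral_shift_aux d₀ hd₀meas M']
      _ = eLpNorm f₀ 1 μ + ENNReal.ofReal t * eLpNorm f₁ ∞ μ := by
          rw [hlayer₀, hM', ENNReal.ofReal_toReal h₁.2.ne, add_comm]
  have hIfin : I ≠ ∞ := by
    refine ne_top_of_le_ne_top ?_ (hKey g₀ g₁ hgsum hg₀ hg₁)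
    exact ENNReal.add_ne_top.2 ⟨hg₀.2.ne, ENNReal.mul_ne_top ENNReal.ofReal_ne_top hg₁.2.ne⟩
  -- RHS equals I.toReal
  have hRHS : ∫ s in Ioo (0:ℝ) t, G s = I.toReal := by
    rw [hI_def]
    exact integral_eq_lintegral_of_nonneg_ae
      (Filter.Eventually.of_forall fun s => hG_nonneg s) hGaemeas.aestronglyMeasurable
  set Kset := {r : ℝ | ∃ f₀ f₁ : α → ℝ, f = f₀ + f₁ ∧ MemLp f₀ 1 μ ∧ MemLp f₁ ∞ μ ∧
        r = (eLpNorm f₀ 1 μ).toReal + t * (eLpNorm f₁ ∞ μ).toReal} with hKset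
  have hKne : Kset.Nonempty :=
    ⟨_, g₀, g₁, hgsum, hg₀, hg₁, rfl⟩
  have hKbdd : BddBelow Kset := by
    refine ⟨0, ?_⟩
    rintro r ⟨f₀, f₁, _, _, _, rfl⟩
    have := ENNReal.toReal_nonneg (a := eLpNorm f₀ 1 μ)
    have := ENNReal.toReal_nonneg (a := eLpNorm f₁ ∞ μ)
    nlinarith [ht.le]
  have hge : I.toReal ≤ sInf Kset := by
    apply le_csInf hKne
    rintro r ⟨f₀, f₁, hsum', h₀, h₁, rfl⟩
    have hk := hKey f₀ f₁ hsum' h₀ h₁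
    have hfin : eLpNorm f₀ 1 μ + ENNReal.ofReal t * eLpNorm f₁ ∞ μ ≠ ∞ :=
      ENNReal.add_ne_top.2 ⟨h₀.2.ne, ENNReal.mul_ne_top ENNReal.ofReal_ne_top h₁.2.ne⟩
    have := ENNReal.toReal_mono hfin hk
    rwa [ENNReal.toReal_add h₀.2.ne (ENNReal.mul_ne_top ENNReal.ofReal_ne_top h₁.2.ne),
      ENNReal.toReal_mul, ENNReal.toReal_ofReal ht.le] at this
  -- the truncation decomposition
  have hle : sInf Kset ≤ I.toReal := by
    set c := G t with hc_def
    have hc0 : 0 ≤ c := hG_nonneg t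
    have hdc : d c ≤ ENNReal.ofReal t := hG_mem t ht
    set f₁ : α → ℝ := fun x => max (-c) (min c (f x)) with hf₁def
    set f₀ : α → ℝ := fun x => f x - f₁ x with hf₀def
    have hsum' : f = f₀ + f₁ := by
      funext x; simp [hf₀def]
    have hf₁bd : ∀ x, |f₁ x| ≤ c := by
      intro x
      rw [abs_le]
      constructor
      · exact le_max_left _ _
      · exact max_le (by linarith) (min_le_left _ _)
    have hf₁m : AEStronglyMeasurable f₁ μ := by
      have hcont : Continuous fun y : ℝ => max (-c) (min c y) :=
        continuous_const.max (continuous_const.min continuous_id)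
      exact (hcont.measurable.comp_aemeasurable hfae).aestronglyMeasurable
    have hmem₁ : MemLp f₁ ∞ μ :=
      memLp_top_of_bound hf₁m c (Filter.Eventually.of_forall fun x => by
        rw [Real.norm_eq_abs]; exact hf₁bd x)
    have hnorm₁ : (eLpNorm f₁ ∞ μ).toReal ≤ c := by
      have h := eLpNormEssSup_le_of_ae_bound (μ := μ) (C := c)
        (Filter.Eventually.of_forall fun x => by rw [Real.norm_eq_abs]; exact hf₁bd x)
      rw [eLpNorm_exponent_top]
      calc (eLpNormEssSup f₁ μ).toReal ≤ (ENNReal.ofReal c).toReal :=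
            ENNReal.toReal_mono ENNReal.ofReal_ne_top h
        _ = c := ENNReal.toReal_ofReal hc0
    have hf₀x : ∀ x, |f₀ x| = max (|f x| - c) 0 := by
      intro x
      rcases le_total (f x) c with h1 | h1
      · rcases le_total (-c) (f x) with h2 | h2
        · have : f₁ x = f x := by
            rw [hf₁def]; simp only []
            rw [min_eq_right h1, max_eq_right h2]
          rw [hf₀def]; simp only [this, sub_self, abs_zero]
          rw [max_eq_right]
          have : |f x| ≤ c := abs_le.2 ⟨h2, h1⟩
          linarith
        · have : f₁ x = -c := by
            rw [hf₁def]; simp only []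
            rw [max_eq_left]
            exact le_trans (min_le_right _ _) h2
          rw [hf₀def]; simp only [this]
          have hfx : f x ≤ -c := h2
          have habs : |f x| = -f x := abs_of_nonpos (by linarith)
          rw [max_eq_left (by rw [habs]; linarith)]
          rw [abs_of_nonpos (by linarith), habs]
          ring
      · have : f₁ x = c := by
          rw [hf₁def]; simp only []
          rw [min_eq_left h1, max_eq_right (by linarith)]
        rw [hf₀def]; simp only [this]
        have habs : |f x| = f x := abs_of_nonneg (by linarith)
        rw [max_eq_left (by rw [habs]; linarith)]
        rw [abs_of_nonneg (by linarith), habs]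
    have hf₀m : AEStronglyMeasurable f₀ μ := hfaesm.sub hf₁m
    have hlayer : ∫⁻ x, ‖f₀ x‖ₑ ∂μ = ∫⁻ u in Ioi c, d u := by
      have h1 : ∫⁻ x, ‖f₀ x‖ₑ ∂μ
          = ∫⁻ u in Ioi (0:ℝ), μ {x | u < max (|f x| - c) 0} := by
        have hm : AEMeasurable (fun x => max (|f x| - c) 0) μ :=
          ((habs hfae).sub aemeasurable_const).max aemeasurable_const
        have hlc := lintegral_eq_lintegral_meas_lt μ (f := fun x => max (|f x| - c) 0)
          (Filter.Eventually.of_forall fun x => le_max_right _ _) hm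
        rw [← hlc]
        exact lintegral_congr fun x => by
          rw [Real.enorm_eq_ofReal_abs, hf₀x x]
      have h2 : ∫⁻ u in Ioi (0:ℝ), μ {x | u < max (|f x| - c) 0}
          = ∫⁻ v in Ioi (0:ℝ), d (c + v) := by
        refine setLIntegral_congr_fun measurableSet_Ioi
          (fun u hu => ?_)
        have hu0 : 0 < u := hu
        show μ {x | u < max (|f x| - c) 0} = μ {x | c + u < |f x|}
        congr 1
        ext x
        simp only [mem_setOf_eq, lt_max_iff]
        constructor
        · rintro (h | h)
          · linarith
          · linarith
        · intro h; left; linarith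
      have h3 := lintegral_shift_aux (fun v => d (c + v))
        (hd_meas.comp (measurable_const.add measurable_id)) c
      rw [h1, h2, ← h3]
      refine (setLIntegral_congr_fun measurableSet_Ioi
        (fun u _ => ?_)).symm
      show d u = d (c + (u - c))
      congr 1
      ring
    have hIoicIoi0 : Ioi c ⊆ Ioi (0:ℝ) := fun u hu => lt_of_le_of_lt hc0 hu
    have hmin_eq : ∀ u : ℝ, c < u → min (ENNReal.ofReal t) (d u) = d u := by
      intro u hu
      exact min_eq_right ((hd_anti hu.le).trans hdc)
    have hfin₀ : ∫⁻ u in Ioi c, d u ≠ ∞ := by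
      have : ∫⁻ u in Ioi c, d u ≤ I := by
        rw [hI_eq]
        calc ∫⁻ u in Ioi c, d u
            = ∫⁻ u in Ioi c, min (ENNReal.ofReal t) (d u) := by
              refine (setLIntegral_congr_fun measurableSet_Ioi
                (fun u hu => (hmin_eq u hu).symm))
          _ ≤ ∫⁻ u in Ioi (0:ℝ), min (ENNReal.ofReal t) (d u) :=
              lintegral_mono_set hIoicIoi0
      exact ne_top_of_le_ne_top hIfin this
    have hmem₀ : MemLp f₀ 1 μ := by
      refine ⟨hf₀m, ?_⟩
      rw [eLpNorm_one_eq_lintegral_enorm, hlayer]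
      exact lt_of_le_of_ne le_top hfin₀
    have hkey2 : eLpNorm f₀ 1 μ + ENNReal.ofReal t * ENNReal.ofReal c ≤ I := by
      rw [hI_eq, eLpNorm_one_eq_lintegral_enorm, hlayer]
      have hsub : Ioo (0:ℝ) c ∪ Ioi c ⊆ Ioi (0:ℝ) := by
        apply union_subset Ioo_subset_Ioi_self hIoicIoi0
      calc (∫⁻ u in Ioi c, d u) + ENNReal.ofReal t * ENNReal.ofReal c
          = (∫⁻ u in Ioo (0:ℝ) c, ENNReal.ofReal t) + ∫⁻ u in Ioi c, d u := by
            rw [setLIntegral_const, Real.volume_Ioo, sub_zero, add_comm]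
        _ = (∫⁻ u in Ioo (0:ℝ) c, min (ENNReal.ofReal t) (d u))
            + ∫⁻ u in Ioi c, min (ENNReal.ofReal t) (d u) := by
            congr 1
            · refine setLIntegral_congr_fun measurableSet_Ioo
                (fun u hu => ?_)
              have hu0 : 0 ≤ u := hu.1.le
              have : ¬ (d u ≤ ENNReal.ofReal t) := by
                intro hcon
                have := (hG_iff t ht u hu0).1 hcon
                rw [← hc_def] at this
                exact absurd hu.2 (not_lt.2 this)
              rw [min_eq_left (le_of_lt (not_le.1 this))]
            · refine setLIntegral_congr_fun measurableSet_Ioi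
                (fun u hu => (hmin_eq u hu).symm)
        _ = ∫⁻ u in Ioo (0:ℝ) c ∪ Ioi c, min (ENNReal.ofReal t) (d u) := by
            rw [lintegral_union measurableSet_Ioi ((Ioc_disjoint_Ioi le_rfl).mono_left Ioo_subset_Ioc_self)]
        _ ≤ ∫⁻ u in Ioi (0:ℝ), min (ENNReal.ofReal t) (d u) :=
            lintegral_mono_set hsub
    have hrle : (eLpNorm f₀ 1 μ).toReal + t * (eLpNorm f₁ ∞ μ).toReal ≤ I.toReal := by
      have h1 := ENNReal.toReal_mono hIfin hkey2
      rw [ENNReal.toReal_add (by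
          rw [eLpNorm_one_eq_lintegral_enorm, hlayer]; exact hfin₀)
        (ENNReal.mul_ne_top ENNReal.ofReal_ne_top ENNReal.ofReal_ne_top),
        ENNReal.toReal_mul, ENNReal.toReal_ofReal ht.le, ENNReal.toReal_ofReal hc0] at h1
      nlinarith [hnorm₁, ht.le]
    exact le_trans (csInf_le hKbdd ⟨f₀, f₁, hsum', hmem₀, hmem₁, rfl⟩) hrle
  rw [hRHS]
  exact le_antisymm hle hge
end

section
/- Let T be a positive linear operator on L¹(Ω,μ) + L^∞(Ω,μ) that is simultaneously an L¹-contraction and an L^∞-contraction, let A_k f = (1/k)Σ_{j=0}^{k-1} T^j f and A* f = sup_{k≥1} A_k f. Then for every f ∈ L¹ and every λ > 0, λ · μ({A* f > λ}) ≤ ‖f‖₁. -/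
open MeasureTheory Set

set_option linter.unusedSectionVars false
set_option maxHeartbeats 1000000

section DSAux
variable {α : Type*} [MeasurableSpace α] {μ : Measure α} {T : (α → ℝ) → (α → ℝ)}

lemma DS_T_zero (hsmul : ∀ (c : ℝ) (g : α → ℝ), T (c • g) = c • T g) : T 0 = 0 := by
  have h := hsmul 0 0
  simpa using h

lemma DS_T_mono (hadd : ∀ g h, T (g + h) = T g + T h)
    (hpos : ∀ g, (∀ x, 0 ≤ g x) → ∀ x, 0 ≤ T g x)
    {u v : α → ℝ} (h : ∀ x, u x ≤ v x) : ∀ x, T u x ≤ T v x := by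
  intro x
  have h1 : T v = T u + T (v - u) := by
    have h2 := hadd u (v - u)
    rwa [add_sub_cancel] at h2
  have h2 : 0 ≤ T (v - u) x := hpos _ (fun y => sub_nonneg.2 (h y)) x
  have h3 := congrFun h1 x
  rw [h3, Pi.add_apply]
  exact le_add_of_nonneg_right h2

lemma DS_iter_add (hadd : ∀ g h, T (g + h) = T g + T h) :
    ∀ (n : ℕ) (g h : α → ℝ), T^[n] (g + h) = T^[n] g + T^[n] h := by
  intro n
  induction n with
  | zero => intro g h; simp
  | succ n ih =>
    intro g h
    simp only [Function.iterate_succ_apply', ih, hadd]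

lemma DS_iter_smul (hsmul : ∀ (c : ℝ) (g : α → ℝ), T (c • g) = c • T g) :
    ∀ (n : ℕ) (c : ℝ) (g : α → ℝ), T^[n] (c • g) = c • T^[n] g := by
  intro n
  induction n with
  | zero => intro c g; simp
  | succ n ih =>
    intro c g
    simp only [Function.iterate_succ_apply', ih, hsmul]

lemma DS_iter_meas (hmeas : ∀ g, Measurable g → Measurable (T g)) :
    ∀ (n : ℕ) (g : α → ℝ), Measurable g → Measurable (T^[n] g) := by
  intro n
  induction n with
  | zero => intro g hg; simpa using hg
  | succ n ih =>
    intro g hg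
    rw [Function.iterate_succ_apply']
    exact hmeas _ (ih g hg)

lemma DS_iter_int (hL1 : ∀ g, Integrable g μ → Integrable (T g) μ ∧ ∫ x, |T g x| ∂μ ≤ ∫ x, |g x| ∂μ) :
    ∀ (n : ℕ) (g : α → ℝ), Integrable g μ → Integrable (T^[n] g) μ := by
  intro n
  induction n with
  | zero => intro g hg; simpa using hg
  | succ n ih =>
    intro g hg
    rw [Function.iterate_succ_apply']
    exact (hL1 _ (ih g hg)).1

lemma DS_iter_linf (hLinf : ∀ (g : α → ℝ) (C : ℝ), (∀ x, |g x| ≤ C) → ∀ x, |T g x| ≤ C) :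
    ∀ (n : ℕ) (g : α → ℝ) (C : ℝ), (∀ x, |g x| ≤ C) → ∀ x, |T^[n] g x| ≤ C := by
  intro n
  induction n with
  | zero => intro g C hg; simpa using hg
  | succ n ih =>
    intro g C hg
    rw [Function.iterate_succ_apply']
    exact hLinf _ _ (ih g C hg)

lemma DS_T_sum (hadd : ∀ g h, T (g + h) = T g + T h)
    (hsmul : ∀ (c : ℝ) (g : α → ℝ), T (c • g) = c • T g)
    {ι : Type*} (s : Finset ι) (u : ι → α → ℝ) :
    T (∑ i ∈ s, u i) = ∑ i ∈ s, T (u i) := by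
  classical
  induction s using Finset.induction_on with
  | empty => simpa using DS_T_zero hsmul
  | @insert _ _ h ih => rw [Finset.sum_insert h, Finset.sum_insert h, hadd, ih]

lemma DS_integrable_sup' {ι : Type*} (s : Finset ι) (hs : s.Nonempty) (u : ι → α → ℝ)
    (hu : ∀ i ∈ s, Integrable (u i) μ) :
    Integrable (fun x => s.sup' hs fun i => u i x) μ := by
  classical
  induction hs using Finset.Nonempty.cons_induction with
  | singleton a =>
    simp only [Finset.sup'_singleton]
    exact hu a (by simp)
  | cons a s ha hs ih =>
    simp only [Finset.sup'_cons hs]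
    have h1 : Integrable (u a) μ := hu a (by simp)
    have h2 : Integrable (fun x => s.sup' hs fun i => u i x) μ :=
      ih fun i hi => hu i (by simp [hi])
    exact h1.sup h2

end DSAux

section DSHopf
variable {α : Type*} [MeasurableSpace α] {μ : Measure α} {T : (α → ℝ) → (α → ℝ)}

lemma DS_S_succ (hadd : ∀ g h, T (g + h) = T g + T h)
    (hsmul : ∀ (c : ℝ) (g : α → ℝ), T (c • g) = c • T g)
    (g : α → ℝ) (k : ℕ) (x : α) :
    ∑ j ∈ Finset.range (k+1), T^[j] g x
      = g x + T (fun y => ∑ j ∈ Finset.range k, T^[j] g y) x := by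
  have h1 : (fun y => ∑ j ∈ Finset.range k, T^[j] g y)
      = ∑ j ∈ Finset.range k, T^[j] g := by
    funext y; simp
  rw [h1, DS_T_sum hadd hsmul, Finset.sum_range_succ']
  simp [Function.iterate_succ_apply', add_comm]

lemma DS_hopf (hadd : ∀ g h, T (g + h) = T g + T h)
    (hsmul : ∀ (c : ℝ) (g : α → ℝ), T (c • g) = c • T g)
    (hmeas : ∀ g, Measurable g → Measurable (T g))
    (hpos : ∀ g, (∀ x, 0 ≤ g x) → ∀ x, 0 ≤ T g x)
    (hL1 : ∀ g, Integrable g μ → Integrable (T g) μ ∧ ∫ x, |T g x| ∂μ ≤ ∫ x, |g x| ∂μ)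
    (g : α → ℝ) (hg : Measurable g) (hgi : Integrable g μ)
    (N : ℕ) (hN : (Finset.range N).Nonempty) :
    0 ≤ ∫ x in {x | 0 < (Finset.range N).sup' hN
        fun k => ∑ j ∈ Finset.range (k+1), T^[j] g x}, g x ∂μ := by
  set S : ℕ → α → ℝ := fun k x => ∑ j ∈ Finset.range k, T^[j] g x with hSdef
  set M : α → ℝ := fun x => (Finset.range N).sup' hN fun k => S (k+1) x with hMdef
  have hSmeas : ∀ k, Measurable (S k) := fun k =>
    Finset.measurable_sum _ fun j _ => DS_iter_meas hmeas j g hg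
  have hSint : ∀ k, Integrable (S k) μ := fun k =>
    integrable_finset_sum _ fun j _ => DS_iter_int hL1 j g hgi
  have hMmeas : Measurable M := by
    have h := Finset.measurable_sup' hN (f := fun k => S (k+1)) fun k _ => hSmeas (k+1)
    have he : ((Finset.range N).sup' hN fun k => S (k+1)) = M := by
      funext x
      simp [Finset.sup'_apply, hMdef]
    rwa [he] at h
  have hMint : Integrable M μ := DS_integrable_sup' _ hN _ fun k _ => hSint (k+1)
  set P : α → ℝ := fun x => max (M x) 0 with hPdef
  have hPmeas : Measurable P := hMmeas.max measurable_const
  have hPint : Integrable P μ := hMint.pos_part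
  have hPnn : ∀ x, 0 ≤ P x := fun x => le_max_right _ _
  have hTP := hL1 P hPint
  have hTPnn : ∀ x, 0 ≤ T P x := hpos P hPnn
  have hSP : ∀ k, k < N → ∀ x, S k x ≤ P x := by
    intro k hk x
    cases k with
    | zero => simpa [hSdef] using hPnn x
    | succ m =>
      calc S (m+1) x ≤ M x :=
            Finset.le_sup' (fun k => S (k+1) x) (Finset.mem_range.2 (Nat.lt_of_succ_lt hk))
        _ ≤ P x := le_max_left _ _
  have hkey : ∀ x, M x ≤ g x + T P x := by
    intro x
    apply Finset.sup'_le
    intro k hk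
    have h1 : S (k+1) x = g x + T (S k) x := DS_S_succ hadd hsmul g k x
    have h2 : T (S k) x ≤ T P x := DS_T_mono hadd hpos (hSP k (Finset.mem_range.1 hk)) x
    rw [h1]
    linarith
  have hAmeas : MeasurableSet {x | 0 < M x} := measurableSet_lt measurable_const hMmeas
  have h1 : ∫ x in {x | 0 < M x}, (P x - T P x) ∂μ ≤ ∫ x in {x | 0 < M x}, g x ∂μ := by
    apply setIntegral_mono_on ((hPint.sub hTP.1).integrableOn) (hgi.integrableOn) hAmeas
    intro x hx
    have hx' : 0 < M x := hx
    have hMP : P x = M x := max_eq_left hx'.le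
    have := hkey x
    simp only [Pi.sub_apply]
    rw [hMP]
    linarith
  have h2 : ∫ x in {x | 0 < M x}, (P x - T P x) ∂μ
      = ∫ x in {x | 0 < M x}, P x ∂μ - ∫ x in {x | 0 < M x}, T P x ∂μ :=
    integral_sub hPint.integrableOn hTP.1.integrableOn
  have h3 : ∫ x in {x | 0 < M x}, P x ∂μ = ∫ x, P x ∂μ := by
    apply setIntegral_eq_integral_of_forall_compl_eq_zero
    intro x hx
    simp only [mem_setOf_eq, not_lt] at hx
    exact max_eq_right hx
  have h4 : ∫ x in {x | 0 < M x}, T P x ∂μ ≤ ∫ x, T P x ∂μ :=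
    setIntegral_le_integral hTP.1 (Filter.Eventually.of_forall hTPnn)
  have h5 : ∫ x, T P x ∂μ ≤ ∫ x, P x ∂μ := by
    calc ∫ x, T P x ∂μ ≤ ∫ x, |T P x| ∂μ :=
          integral_mono hTP.1 hTP.1.abs fun x => le_abs_self _
      _ ≤ ∫ x, |P x| ∂μ := hTP.2
      _ = ∫ x, P x ∂μ := by
          apply integral_congr_ae
          exact Filter.Eventually.of_forall fun x => abs_of_nonneg (hPnn x)
  linarith

end DSHopf

/-- The Dunford-Schwartz maximal ergodic inequality: for a positive linear
operator `T` which is both an `L¹`- and an `L∞`-contraction, the maximal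
function `A* f = sup_{k ≥ 1} (1/k) ∑_{j<k} T^j f` of `f ∈ L¹` satisfies
`λ μ({A* f > λ}) ≤ ‖f‖₁`. -/
theorem stmt10 {α : Type*} [MeasurableSpace α] (μ : Measure α)
    (T : (α → ℝ) → (α → ℝ))
    (hadd : ∀ g h, T (g + h) = T g + T h)
    (hsmul : ∀ (c : ℝ) (g : α → ℝ), T (c • g) = c • T g)
    (hmeas : ∀ g, Measurable g → Measurable (T g))
    (hpos : ∀ g, (∀ x, 0 ≤ g x) → ∀ x, 0 ≤ T g x)
    (hL1 : ∀ g, Integrable g μ → Integrable (T g) μ ∧ ∫ x, |T g x| ∂μ ≤ ∫ x, |g x| ∂μ)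
    (hLinf : ∀ (g : α → ℝ) (C : ℝ), (∀ x, |g x| ≤ C) → ∀ x, |T g x| ≤ C)
    (f : α → ℝ) (hfm : Measurable f) (hf : Integrable f μ)
    (lam : ℝ) (hlam : 0 < lam) :
    ENNReal.ofReal lam *
        μ {x | ∃ k : ℕ, 1 ≤ k ∧ lam < (∑ j ∈ Finset.range k, T^[j] f x) / k}
      ≤ ENNReal.ofReal (∫ x, |f x| ∂μ) := by
  classical
  set S : ℕ → α → ℝ := fun k x => ∑ j ∈ Finset.range k, T^[j] f x with hSdef
  have hSmeas : ∀ k, Measurable (S k) := fun k =>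
    Finset.measurable_sum _ fun j _ => DS_iter_meas hmeas j f hfm
  have hSint : ∀ k, Integrable (S k) μ := fun k =>
    integrable_finset_sum _ fun j _ => DS_iter_int hL1 j f hf
  set E : ℕ → Set α := fun N => {x | ∃ k < N, lam * ((k : ℝ) + 1) < S (k+1) x} with hEdef
  have hEeq : ∀ N, E N = ⋃ k ∈ Finset.range N, {x | lam * ((k : ℝ) + 1) < S (k+1) x} := by
    intro N; ext x; simp [hEdef]
  have hEmeas : ∀ N, MeasurableSet (E N) := by
    intro N; rw [hEeq]
    exact (Finset.range N).measurableSet_biUnion fun k _ =>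
      measurableSet_lt measurable_const (hSmeas (k+1))
  have hEfin : ∀ N, μ (E N) < ⊤ := by
    intro N
    rw [hEeq]
    refine lt_of_le_of_lt (measure_mono ?_)
      (measure_biUnion_lt_top (Finset.range N).finite_toSet
        (fun k _ => (hSint (k+1)).measure_norm_gt_lt_top hlam))
    refine iUnion₂_mono fun k _ => ?_
    intro x hx
    have hx' : lam * ((k:ℝ)+1) < S (k+1) x := hx
    have h1 : lam ≤ lam * ((k:ℝ)+1) := by nlinarith [Nat.cast_nonneg (α := ℝ) k]
    have : lam < S (k+1) x := lt_of_le_of_lt h1 hx'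
    simpa [Real.norm_eq_abs] using lt_of_lt_of_le this (le_abs_self _)
  have hDeq : {x | ∃ k : ℕ, 1 ≤ k ∧ lam < (∑ j ∈ Finset.range k, T^[j] f x) / k}
      = ⋃ N, E N := by
    ext x
    simp only [mem_setOf_eq, mem_iUnion, hEdef]
    constructor
    · rintro ⟨k, hk1, hk2⟩
      obtain ⟨m, rfl⟩ : ∃ m, k = m + 1 := ⟨k - 1, by omega⟩
      refine ⟨m + 1, m, Nat.lt_succ_self m, ?_⟩
      have hkpos : (0:ℝ) < ((m:ℝ) + 1) := by positivity
      rw [lt_div_iff₀ (by push_cast; linarith : (0:ℝ) < ((m+1 : ℕ) : ℝ))] at hk2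
      push_cast at hk2 ⊢
      linarith
    · rintro ⟨N, m, _, h⟩
      refine ⟨m + 1, by omega, ?_⟩
      rw [lt_div_iff₀ (by push_cast; positivity : (0:ℝ) < ((m+1 : ℕ) : ℝ))]
      push_cast
      push_cast at h
      linarith
  have hmono : Monotone E := by
    intro N N' hNN x hx
    obtain ⟨k, hk, h⟩ := hx
    exact ⟨k, lt_of_lt_of_le hk hNN, h⟩
  rw [hDeq, hmono.measure_iUnion, ENNReal.mul_iSup]
  apply iSup_le
  intro N
  cases N with
  | zero =>
    have hE0 : E 0 = ∅ := by ext x; simp [hEdef]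
    simp [hE0]
  | succ n =>
    have hN : (Finset.range (n+1)).Nonempty := Finset.nonempty_range_add_one
    set ind : α → ℝ := (E (n+1)).indicator fun _ => (1:ℝ) with hinddef
    have hindmeas : Measurable ind := measurable_const.indicator (hEmeas _)
    have hindint : Integrable ind μ := by
      rw [hinddef, integrable_indicator_iff (hEmeas _)]
      exact integrableOn_const (hEfin _).ne
    have hindbd : ∀ x, |ind x| ≤ 1 := by
      intro x
      rw [hinddef]
      by_cases hx : x ∈ E (n+1) <;> simp [indicator, hx]
    have hindnn : ∀ x, 0 ≤ ind x := by
      intro x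
      rw [hinddef]
      by_cases hx : x ∈ E (n+1) <;> simp [indicator, hx]
    set g : α → ℝ := fun x => f x + (-lam) * ind x with hgdef
    have hgfun : g = f + (-lam) • ind := by
      funext x; simp [hgdef, smul_eq_mul]
    have hgmeas : Measurable g := hfm.add (hindmeas.const_mul _)
    have hgint : Integrable g μ := hf.add (hindint.const_mul _)
    have hiter : ∀ (j : ℕ) (x : α), T^[j] g x = T^[j] f x + (-lam) * T^[j] ind x := by
      intro j x
      have h1 : T^[j] g = T^[j] f + (-lam) • T^[j] ind := by
        rw [hgfun, DS_iter_add hadd, DS_iter_smul hsmul]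
      rw [h1]
      simp [smul_eq_mul]
    have hiterbd : ∀ (j : ℕ) (x : α), T^[j] ind x ≤ 1 := fun j x =>
      (abs_le.1 (DS_iter_linf hLinf j ind 1 hindbd x)).2
    set Sg : ℕ → α → ℝ := fun k x => ∑ j ∈ Finset.range k, T^[j] g x with hSgdef
    have hSg_lb : ∀ (k : ℕ) (x : α), S k x - lam * k ≤ Sg k x := by
      intro k x
      have h1 : Sg k x = ∑ j ∈ Finset.range k, (T^[j] f x + (-lam) * T^[j] ind x) := by
        rw [hSgdef]
        exact Finset.sum_congr rfl fun j _ => hiter j x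
      rw [h1, Finset.sum_add_distrib]
      have h2 : ∑ j ∈ Finset.range k, (-lam) * 1 ≤ ∑ j ∈ Finset.range k, (-lam) * T^[j] ind x :=
        Finset.sum_le_sum fun j _ =>
          mul_le_mul_of_nonpos_left (hiterbd j x) (by linarith)
      have h3 : ∑ j ∈ Finset.range k, (-lam) * 1 = -(lam * k) := by
        rw [Finset.sum_const, Finset.card_range, nsmul_eq_mul]
        ring
      have h4 : (∑ j ∈ Finset.range k, T^[j] f x) = S k x := rfl
      rw [h4] at *
      linarith [h2, h3.symm ▸ h2]
    set Mg : α → ℝ := fun x => (Finset.range (n+1)).sup' hN fun k => Sg (k+1) x with hMgdef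
    have hhopf := DS_hopf hadd hsmul hmeas hpos hL1 g hgmeas hgint (n+1) hN
    have hsub : E (n+1) ⊆ {x | 0 < Mg x} := by
      intro x hx
      obtain ⟨k, hk, hlt⟩ := hx
      have h1 : 0 < Sg (k+1) x := by
        have h2 := hSg_lb (k+1) x
        have h3 : lam * ((k:ℝ)+1) < S (k+1) x := hlt
        push_cast at h2
        linarith
      exact lt_of_lt_of_le h1 (Finset.le_sup' (fun k => Sg (k+1) x) (Finset.mem_range.2 hk))
    set A : Set α := {x | 0 < Mg x} with hAdef
    -- hhopf : 0 ≤ ∫ x in A, g x ∂μ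
    have hgsplit : ∫ x in A, g x ∂μ
        = ∫ x in A, f x ∂μ + ∫ x in A, (-lam) * ind x ∂μ := by
      exact integral_add hf.integrableOn ((hindint.const_mul _).integrableOn)
    have hindA : ∫ x in A, ind x ∂μ = (μ (E (n+1))).toReal := by
      rw [hinddef]
      rw [setIntegral_indicator (hEmeas _)]
      rw [inter_eq_self_of_subset_right hsub]
      simp [setIntegral_const]
      rfl
    have hfA : ∫ x in A, f x ∂μ ≤ ∫ x, |f x| ∂μ := by
      calc ∫ x in A, f x ∂μ ≤ ∫ x in A, |f x| ∂μ :=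
            integral_mono hf.integrableOn hf.abs.integrableOn fun x => le_abs_self _
        _ ≤ ∫ x, |f x| ∂μ :=
            setIntegral_le_integral hf.abs
              (Filter.Eventually.of_forall fun x => abs_nonneg _)
    have hconst : ∫ x in A, (-lam) * ind x ∂μ = (-lam) * (μ (E (n+1))).toReal := by
      rw [integral_const_mul, hindA]
    have hbound : lam * (μ (E (n+1))).toReal ≤ ∫ x, |f x| ∂μ := by
      rw [hgsplit, hconst] at hhopf
      linarith
    calc ENNReal.ofReal lam * μ (E (n+1))
        = ENNReal.ofReal lam * ENNReal.ofReal (μ (E (n+1))).toReal := by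
          rw [ENNReal.ofReal_toReal (hEfin (n+1)).ne]
      _ = ENNReal.ofReal (lam * (μ (E (n+1))).toReal) :=
          (ENNReal.ofReal_mul hlam.le).symm
      _ ≤ ENNReal.ofReal (∫ x, |f x| ∂μ) := ENNReal.ofReal_le_ofReal hbound
end

section
/- Let 0 < α < 1 ≤ r < ∞ and let f : ℝ → ℝ be α-Hölder continuous and in L^r(ℝ). Then ‖f‖_∞ ≤ C(α,r) ‖f‖_r^{rα/(1+rα)} · [f]_{C^{0,α}}^{1/(1+rα)}, where [f]_{C^{0,α}} = sup_{x≠y} |f(x)-f(y)|/|x-y|^α. -/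
open MeasureTheory
open scoped ENNReal

lemma stmt17_core (α r : ℝ) (hα0 : 0 < α) (hr : 1 ≤ r) (f : ℝ → ℝ) (H : ℝ) (hH : 0 < H)
    (hHol : ∀ x y : ℝ, |f x - f y| ≤ H * |x - y| ^ α)
    (hf : MemLp f (ENNReal.ofReal r) volume) (x : ℝ) (hM : 0 < |f x|) :
    (|f x| / 2) ^ r * (|f x| / (2 * H)) ^ (1 / α) ≤
      ((eLpNorm f (ENNReal.ofReal r) volume).toReal) ^ r := by
  set M := |f x| with hMdef
  have hr0 : (0 : ℝ) < r := lt_of_lt_of_le one_pos hr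
  set δ : ℝ := (M / (2 * H)) ^ (1 / α) with hδdef
  have hδpos : 0 < δ := Real.rpow_pos_of_pos (by positivity) _
  have hδα : δ ^ α = M / (2 * H) := by
    rw [hδdef, ← Real.rpow_mul (by positivity), one_div_mul_cancel hα0.ne', Real.rpow_one]
  -- pointwise lower bound on the interval
  have hlow : ∀ y ∈ Set.Icc x (x + δ), M / 2 ≤ |f y| := by
    intro y hy
    have h1 : |f x - f y| ≤ H * |x - y| ^ α := hHol x y
    have h2 : |x - y| ≤ δ := by
      rw [abs_sub_comm, abs_of_nonneg (by linarith [hy.1])]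
      linarith [hy.2]
    have h3 : |x - y| ^ α ≤ δ ^ α :=
      Real.rpow_le_rpow (abs_nonneg _) h2 hα0.le
    have h4 : H * |x - y| ^ α ≤ M / 2 := by
      calc H * |x - y| ^ α ≤ H * (M / (2 * H)) := by
            rw [← hδα]; exact mul_le_mul_of_nonneg_left h3 hH.le
        _ = M / 2 := by field_simp
    have h5 := abs_sub_abs_le_abs_sub (f x) (f y)
    rw [← hMdef] at h5
    linarith
  set p := ENNReal.ofReal r with hpdef
  have hp0 : p ≠ 0 := by
    simp only [hpdef, ne_eq, ENNReal.ofReal_eq_zero, not_le]; linarith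
  have hptop : p ≠ ∞ := ENNReal.ofReal_ne_top
  have hpr : p.toReal = r := ENNReal.toReal_ofReal hr0.le
  have hsn : eLpNorm f p volume = (∫⁻ y, (‖f y‖₊ : ℝ≥0∞) ^ p.toReal ∂volume) ^ (1 / p.toReal) :=
    eLpNorm_eq_lintegral_rpow_enorm_toReal hp0 hptop (f := f) (μ := volume)
  rw [hpr] at hsn
  set I : ℝ≥0∞ := ∫⁻ y, (‖f y‖₊ : ℝ≥0∞) ^ r ∂volume with hIdef
  set N : ℝ := (eLpNorm f p volume).toReal with hNdef
  have hN0 : 0 ≤ N := ENNReal.toReal_nonneg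
  have hIbound : ENNReal.ofReal ((M / 2) ^ r * δ) ≤ I := by
    have h1 : ∫⁻ _ in Set.Icc x (x + δ), ENNReal.ofReal ((M / 2) ^ r) ∂volume
        ≤ ∫⁻ y in Set.Icc x (x + δ), (‖f y‖₊ : ℝ≥0∞) ^ r ∂volume := by
      apply setLIntegral_mono' measurableSet_Icc
      intro y hy
      rw [← enorm_eq_nnnorm, ← ofReal_norm, Real.norm_eq_abs,
        ENNReal.ofReal_rpow_of_nonneg (abs_nonneg _) hr0.le]
      exact ENNReal.ofReal_le_ofReal
        (Real.rpow_le_rpow (by positivity) (hlow y hy) hr0.le)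
    have h2 : ∫⁻ _ in Set.Icc x (x + δ), ENNReal.ofReal ((M / 2) ^ r) ∂volume
        = ENNReal.ofReal ((M / 2) ^ r * δ) := by
      rw [setLIntegral_const, Real.volume_Icc, add_sub_cancel_left,
        ← ENNReal.ofReal_mul (by positivity)]
    calc ENNReal.ofReal ((M / 2) ^ r * δ) = _ := h2.symm
      _ ≤ _ := h1
      _ ≤ I := setLIntegral_le_lintegral _ _
  have hIN : I = ENNReal.ofReal (N ^ r) := by
    have h3 : (I ^ (1 / r)) ^ r = I := by
      rw [← ENNReal.rpow_mul, one_div_mul_cancel hr0.ne', ENNReal.rpow_one]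
    have h4 : ENNReal.ofReal N = eLpNorm f p volume := ENNReal.ofReal_toReal hf.2.ne
    rw [← h3, ← hsn, ← h4, ENNReal.ofReal_rpow_of_nonneg hN0 hr0.le]
  rw [hIN] at hIbound
  have := (ENNReal.ofReal_le_ofReal_iff (by positivity)).mp hIbound
  linarith

/-- For `0 < α < 1 ≤ r < ∞` there is a constant `C(α,r)` such that every
`α`-Hölder continuous `f ∈ L^r(ℝ)` satisfies
`‖f‖_∞ ≤ C ‖f‖_r^{rα/(1+rα)} [f]_{C^{0,α}}^{1/(1+rα)}`. -/
theorem stmt17 (α r : ℝ) (hα0 : 0 < α) (hα1 : α < 1) (hr : 1 ≤ r) :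
    ∃ C : ℝ, 0 < C ∧ ∀ (f : ℝ → ℝ) (H : ℝ), 0 ≤ H →
      (∀ x y : ℝ, |f x - f y| ≤ H * |x - y| ^ α) →
      MemLp f (ENNReal.ofReal r) volume →
      ∀ x : ℝ, |f x| ≤
        C * ((eLpNorm f (ENNReal.ofReal r) volume).toReal) ^ (r * α / (1 + r * α)) *
          H ^ (1 / (1 + r * α)) := by
  refine ⟨2, by norm_num, ?_⟩
  intro f H hH hHol hf x
  have hr0 : (0 : ℝ) < r := lt_of_lt_of_le one_pos hr
  set N : ℝ := (eLpNorm f (ENNReal.ofReal r) volume).toReal with hNdef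
  have hN0 : 0 ≤ N := ENNReal.toReal_nonneg
  set M := |f x| with hMdef
  rcases eq_or_lt_of_le (abs_nonneg (f x)) with hM0 | hM0
  · rw [hMdef, ← hM0]; positivity
  rcases eq_or_lt_of_le hH with hH0 | hH0
  · -- H = 0 : contradiction, f is a nonzero constant
    exfalso
    set K : ℝ := N ^ r / (M / 2) ^ r with hKdef
    have hK0 : 0 ≤ K := by positivity
    set H' : ℝ := M / (2 * (K + 1) ^ α) with hH'def
    have hH'pos : 0 < H' := by positivity
    have hHol' : ∀ x y : ℝ, |f x - f y| ≤ H' * |x - y| ^ α := by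
      intro a b
      have := hHol a b
      rw [← hH0, zero_mul] at this
      have h2 : (0:ℝ) ≤ H' * |a - b| ^ α := by positivity
      linarith
    have key := stmt17_core α r hα0 hr f H' hH'pos hHol' hf x hM0
    rw [← hMdef, ← hNdef] at key
    have h3 : M / (2 * H') = (K + 1) ^ α := by
      rw [hH'def]; field_simp; exact mul_inv_cancel₀ hM0.ne'
    have h4 : (M / (2 * H')) ^ (1 / α) = K + 1 := by
      rw [h3, ← Real.rpow_mul (by positivity), mul_one_div, div_self hα0.ne',
        Real.rpow_one]
    rw [h4] at key
    have h5 : (0:ℝ) < (M / 2) ^ r := by positivity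
    have h6 : N ^ r = K * (M / 2) ^ r := by
      rw [hKdef]; field_simp
    nlinarith
  · -- main case
    have key := stmt17_core α r hα0 hr f H hH0 hHol hf x hM0
    rw [← hMdef, ← hNdef] at key
    set β : ℝ := r + 1 / α with hβdef
    have hβpos : 0 < β := by positivity
    have h1 : (M / 2) ^ r * (M / (2 * H)) ^ (1 / α) = M ^ β / (2 ^ β * H ^ (1 / α)) := by
      rw [Real.div_rpow hM0.le (by norm_num), Real.div_rpow hM0.le (by positivity),
        Real.mul_rpow (by norm_num) hH0.le, hβdef, Real.rpow_add hM0,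
        Real.rpow_add two_pos]
      field_simp
    rw [h1, div_le_iff₀ (by positivity)] at key
    -- M ^ β ≤ N ^ r * (2 ^ β * H ^ (1/α)) = (2 * N^(r/β) * H^(1/(αβ)))^β
    have hαβ : α * β = 1 + r * α := by rw [hβdef]; field_simp; ring
    have h2 : M = (M ^ β) ^ (1 / β) := by
      rw [← Real.rpow_mul hM0.le, mul_one_div, div_self hβpos.ne', Real.rpow_one]
    have h3 : (M ^ β) ^ (1 / β) ≤ (N ^ r * (2 ^ β * H ^ (1 / α))) ^ (1 / β) :=
      Real.rpow_le_rpow (by positivity) key (by positivity)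
    have h4 : (N ^ r * (2 ^ β * H ^ (1 / α))) ^ (1 / β)
        = 2 * N ^ (r * α / (1 + r * α)) * H ^ (1 / (1 + r * α)) := by
      rw [Real.mul_rpow (by positivity) (by positivity),
        Real.mul_rpow (by positivity) (by positivity),
        ← Real.rpow_mul hN0, ← Real.rpow_mul (by norm_num : (0:ℝ) ≤ 2),
        ← Real.rpow_mul hH]
      have e0 : β * (1 / β) = 1 := mul_one_div_cancel hβpos.ne'
      have e1 : r * (1 / β) = r * α / (1 + r * α) := by
        rw [← hαβ]; field_simp
      have e2 : 1 / α * (1 / β) = 1 / (1 + r * α) := by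
        rw [← hαβ]; field_simp
      rw [e0, e1, e2, Real.rpow_one]; ring
    calc M = (M ^ β) ^ (1 / β) := h2
      _ ≤ _ := h3
      _ = _ := h4
end

section
/- Let f be a measurable function on ℝⁿ and suppose there exist constants b > 0, B ≥ 0 such that for every cube Q ⊂ ℝⁿ there exists c_Q ∈ ℝ with |{x ∈ Q : |f(x) - c_Q| > s}| ≤ B e^{-bs} |Q| for all s > 0. Then f has bounded mean oscillation: sup_Q (1/|Q|)∫_Q |f - f_Q| ≤ 2B/b, where f_Q = (1/|Q|)∫_Q f. -/
open MeasureTheory Set Metric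

/-- Converse John–Nirenberg: if for every cube `Q` (a sup-norm ball in `ℝⁿ`)
there is `c_Q` with `|{x ∈ Q : |f x - c_Q| > s}| ≤ B e^{-bs} |Q|` for all `s > 0`,
then `f` is of bounded mean oscillation with `sup_Q ⨍_Q |f - f_Q| ≤ 2B/b`. -/
theorem stmt18 {n : ℕ} (f : (Fin n → ℝ) → ℝ) (hf : Measurable f)
    (b B : ℝ) (hb : 0 < b) (hB : 0 ≤ B)
    (h : ∀ (c : Fin n → ℝ) (r : ℝ), 0 < r → ∃ cQ : ℝ, ∀ s : ℝ, 0 < s →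
      volume {x ∈ Metric.ball c r | s < |f x - cQ|}
        ≤ ENNReal.ofReal (B * Real.exp (-(b * s))) * volume (Metric.ball c r)) :
    ∀ (c : Fin n → ℝ) (r : ℝ), 0 < r →
      (⨍ x in Metric.ball c r, |f x - ⨍ y in Metric.ball c r, f y ∂volume| ∂volume)
        ≤ 2 * B / b := by
  intro c r hr
  obtain ⟨cQ, hcQ⟩ := h c r hr
  set Q := Metric.ball c r with hQdef
  have hQm : MeasurableSet Q := measurableSet_ball
  have hVpos : 0 < volume Q := measure_ball_pos volume c hr
  have hVlt : volume Q < ⊤ := measure_ball_lt_top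
  have hmeas : Measurable fun x => |f x - cQ| := (hf.sub measurable_const).abs
  -- the value of the exponential integral
  have hexp_int : IntegrableOn (fun t : ℝ => B * Real.exp (-(b * t))) (Ioi (0:ℝ)) := by
    have := (exp_neg_integrableOn_Ioi 0 hb).const_mul B
    simp only [neg_mul] at this ⊢
    exact this
  have hexp_val : (∫ t in Ioi (0:ℝ), B * Real.exp (-(b * t))) = B / b := by
    rw [MeasureTheory.integral_const_mul]
    have := integral_comp_mul_left_Ioi (fun x => Real.exp (-x)) 0 hb
    simp only [mul_zero, smul_eq_mul] at this
    rw [this, integral_exp_neg_Ioi]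
    simp [div_eq_mul_inv]
  have hJ : (∫⁻ t in Ioi (0:ℝ), ENNReal.ofReal (B * Real.exp (-(b * t))))
      = ENNReal.ofReal (B / b) := by
    rw [← ofReal_integral_eq_lintegral_ofReal hexp_int
      (Filter.Eventually.of_forall fun t => by positivity), hexp_val]
  -- the layer-cake bound on the lintegral
  have key : (∫⁻ x in Q, ENNReal.ofReal |f x - cQ|) ≤ ENNReal.ofReal (B / b) * volume Q := by
    rw [lintegral_eq_lintegral_meas_lt (volume.restrict Q)
      (Filter.Eventually.of_forall fun x => abs_nonneg _) hmeas.aemeasurable]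
    calc (∫⁻ t in Ioi (0:ℝ), volume.restrict Q {a | t < |f a - cQ|})
        ≤ ∫⁻ t in Ioi (0:ℝ), ENNReal.ofReal (B * Real.exp (-(b * t))) * volume Q := by
          refine setLIntegral_mono' measurableSet_Ioi fun t ht => ?_
          rw [Measure.restrict_apply (measurableSet_lt measurable_const hmeas)]
          have hset : {a | t < |f a - cQ|} ∩ Q = {x ∈ Q | t < |f x - cQ|} := by
            ext x; simp [and_comm]
          rw [hset]
          exact hcQ t ht
      _ = ENNReal.ofReal (B / b) * volume Q := by
          rw [lintegral_mul_const _ (by fun_prop), hJ]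
  -- integrability
  have hfin : (∫⁻ x in Q, ENNReal.ofReal |f x - cQ|) < ⊤ :=
    key.trans_lt (ENNReal.mul_lt_top ENNReal.ofReal_lt_top hVlt)
  have hint1 : IntegrableOn (fun x => f x - cQ) Q volume := by
    refine ⟨(hf.sub measurable_const).aestronglyMeasurable, ?_⟩
    rw [hasFiniteIntegral_iff_norm]
    simpa [Real.norm_eq_abs] using hfin
  have hintf : IntegrableOn f Q volume := by
    have h2 := hint1.add (integrableOn_const hVlt.ne : IntegrableOn (fun _ => cQ) Q volume)
    have hfe : f = fun x => (f x - cQ) + cQ := by funext x; ring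
    rw [hfe]
    exact h2
  set V : ℝ := (volume Q).toReal with hVdef
  have hVr : 0 < V := ENNReal.toReal_pos hVpos.ne' hVlt.ne
  -- real integral bound
  have hI1 : (∫ x in Q, |f x - cQ|) ≤ B / b * V := by
    have habs : IntegrableOn (fun x => |f x - cQ|) Q volume := hint1.abs
    have := ofReal_integral_eq_lintegral_ofReal habs
      (Filter.Eventually.of_forall fun x => abs_nonneg _)
    have hle : ENNReal.ofReal (∫ x in Q, |f x - cQ|) ≤ ENNReal.ofReal (B / b * V) := by
      rw [this]
      calc (∫⁻ x in Q, ENNReal.ofReal |f x - cQ|) ≤ ENNReal.ofReal (B / b) * volume Q := key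
        _ = ENNReal.ofReal (B / b * V) := by
            rw [ENNReal.ofReal_mul (by positivity), hVdef, ENNReal.ofReal_toReal hVlt.ne]
    have h1 : (0:ℝ) ≤ ∫ x in Q, |f x - cQ| :=
      integral_nonneg fun x => abs_nonneg _
    have h2 : (0:ℝ) ≤ B / b * V := by positivity
    rwa [ENNReal.ofReal_le_ofReal_iff h2] at hle
  set A : ℝ := ⨍ y in Q, f y ∂volume with hA
  have hAeq : A = V⁻¹ * ∫ y in Q, f y := by
    rw [hA, setAverage_eq, smul_eq_mul]
    rfl
  -- |cQ - A| ≤ B/b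
  have hdiff : |cQ - A| ≤ B / b := by
    have hsub : (∫ x in Q, (f x - cQ)) = (∫ x in Q, f x) - cQ * V := by
      rw [integral_sub hintf (integrableOn_const hVlt.ne)]
      simp [mul_comm, hVdef, measureReal_def]
    have habs : |(∫ x in Q, f x) - cQ * V| ≤ B / b * V := by
      rw [← hsub]
      calc |∫ x in Q, (f x - cQ)| ≤ ∫ x in Q, |f x - cQ| := by
            simpa [Real.norm_eq_abs] using norm_integral_le_integral_norm
              (μ := volume.restrict Q) (fun x => f x - cQ)
        _ ≤ B / b * V := hI1
    have h3 : V⁻¹ * (∫ x in Q, f x) - cQ = V⁻¹ * ((∫ x in Q, f x) - cQ * V) := by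
      field_simp
    have h4 : |cQ - A| = V⁻¹ * |(∫ x in Q, f x) - cQ * V| := by
      rw [hAeq, abs_sub_comm, h3, abs_mul, abs_of_pos (inv_pos.2 hVr)]
    rw [h4]
    calc V⁻¹ * |(∫ x in Q, f x) - cQ * V| ≤ V⁻¹ * (B / b * V) := by
          exact mul_le_mul_of_nonneg_left habs (by positivity)
      _ = B / b := by field_simp
  -- final bound
  have hintA : IntegrableOn (fun x => |f x - A|) Q volume :=
    (hintf.sub (integrableOn_const hVlt.ne)).abs
  have hmono : (∫ x in Q, |f x - A|) ≤ ∫ x in Q, (|f x - cQ| + |cQ - A|) := by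
    refine integral_mono hintA (hint1.abs.add (integrableOn_const hVlt.ne)) fun x => ?_
    calc |f x - A| = |(f x - cQ) + (cQ - A)| := by ring_nf
      _ ≤ |f x - cQ| + |cQ - A| := abs_add_le _ _
  have hsum : (∫ x in Q, (|f x - cQ| + |cQ - A|)) ≤ B / b * V + B / b * V := by
    rw [integral_add hint1.abs (integrableOn_const hVlt.ne)]
    have h2 : (∫ _x in Q, |cQ - A|) = |cQ - A| * V := by simp [mul_comm, hVdef, measureReal_def]
    rw [h2]
    exact add_le_add hI1 (mul_le_mul_of_nonneg_right hdiff hVr.le)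
  rw [setAverage_eq, smul_eq_mul]
  calc V⁻¹ * ∫ x in Q, |f x - A| ≤ V⁻¹ * (B / b * V + B / b * V) :=
        mul_le_mul_of_nonneg_left (hmono.trans hsum) (by positivity)
    _ = 2 * B / b := by field_simp; ring
end

section
/- For n ≥ 2 and nonnegative measurable f₁,…,f_n on ℝ^{n-1}, one has ∫_{ℝⁿ} ∏_{j=1}^n f_j(x₁,…,x̂_j,…,x_n) dx ≤ ∏_{j=1}^n ‖f_j‖_{L^{n-1}(ℝ^{n-1})}, where x̂_j denotes omission of the j-th coordinate. -/
open MeasureTheory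
open scoped ENNReal

lemma lw_comp_succAbove {N : ℕ} (x : Fin (N + 2) → ℝ) (j' : Fin (N + 1)) :
    x ∘ (Fin.castSucc j').succAbove
      = Fin.snoc ((x ∘ Fin.castSucc) ∘ j'.succAbove) (x (Fin.last (N + 1))) := by
  funext k
  induction k using Fin.lastCases with
  | last =>
      simp [Function.comp, Fin.succAbove_castSucc_of_le j' (Fin.last N) (Fin.le_last _),
        Fin.succ_last]
  | cast k' =>
      simp [Function.comp, Fin.castSucc_succAbove_castSucc]

lemma lw_measurable_snoc (N : ℕ) :
    Measurable (fun z : ℝ × (Fin N → ℝ) => (Fin.snoc z.2 z.1 : Fin (N + 1) → ℝ)) := by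
  rw [measurable_pi_iff]
  intro k
  induction k using Fin.lastCases with
  | last => simpa using measurable_fst
  | cast k' => simp only [Fin.snoc_castSucc]; fun_prop

lemma lw_base (f : Fin 2 → ((Fin 1 → ℝ) → ℝ≥0∞)) (hf : ∀ j, Measurable (f j)) :
    ∫⁻ x : Fin 2 → ℝ, ∏ j, f j (x ∘ j.succAbove)
      ≤ ∏ j, (∫⁻ y : Fin 1 → ℝ, f j y ^ ((1 : ℕ) : ℝ)) ^ (1 / ((1 : ℕ) : ℝ)) := by
  have hf0' : Measurable fun t : ℝ => f 0 fun _ => t :=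
    (hf 0).comp (by rw [measurable_pi_iff]; intro k; exact measurable_id)
  have h0 : ∀ x : Fin 2 → ℝ, ∏ j, f j (x ∘ j.succAbove)
      = f 0 (fun _ => x (Fin.last 1)) * f 1 (x ∘ Fin.castSucc) := by
    intro x
    rw [Fin.prod_univ_two]
    congr 1
    · congr 1
      funext k
      obtain rfl : k = 0 := Subsingleton.elim _ _
      rfl
    · rw [show (1 : Fin 2) = Fin.last 1 from rfl, Fin.succAbove_last]
  simp_rw [h0]
  have hmp := measurePreserving_piFinSuccAbove (fun _ : Fin 2 => (volume : Measure ℝ))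
      (Fin.last 1)
  have hΦ : Measurable (fun z : ℝ × (Fin 1 → ℝ) => f 0 (fun _ => z.1) * f 1 z.2) := by
    refine Measurable.mul ?_ ((hf 1).comp measurable_snd)
    exact (hf 0).comp (by rw [measurable_pi_iff]; intro k; exact measurable_fst)
  have key : ∫⁻ x : Fin 2 → ℝ, f 0 (fun _ => x (Fin.last 1)) * f 1 (x ∘ Fin.castSucc)
      = ∫⁻ z : ℝ × (Fin 1 → ℝ), f 0 (fun _ => z.1) * f 1 z.2
          ∂((volume : Measure ℝ).prod (Measure.pi fun _ : Fin 1 => (volume : Measure ℝ))) := by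
    rw [← hmp.lintegral_comp hΦ]
    refine lintegral_congr fun x => ?_
    have hx : (x ∘ Fin.castSucc) = Fin.removeNth (Fin.last 1) x := by
      funext i; simp [Fin.removeNth, Fin.succAbove_last]
      obtain rfl : i = 0 := Subsingleton.elim _ _; rfl
    rw [hx]
    rfl
  rw [key, lintegral_prod _ hΦ.aemeasurable]
  simp_rw [lintegral_const_mul _ (hf 1)]
  rw [lintegral_mul_const _ hf0']
  have h1 : ∫⁻ t : ℝ, f 0 (fun _ => t) = ∫⁻ y : Fin 1 → ℝ, f 0 y := by
    refine Eq.trans ?_ ((MeasurePreserving.symm _ (volume_preserving_funUnique (Fin 1) ℝ)).lintegral_comp (hf 0))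
    refine lintegral_congr fun t => ?_
    congr 1
  rw [h1]
  simp only [Fin.prod_univ_two, Nat.cast_one, ENNReal.rpow_one, one_div, inv_one]
  exact le_of_eq rfl

lemma lw_aux : ∀ n : ℕ, ∀ f : Fin (n + 2) → ((Fin (n + 1) → ℝ) → ℝ≥0∞),
    (∀ j, Measurable (f j)) →
    ∫⁻ x : Fin (n + 2) → ℝ, ∏ j, f j (x ∘ j.succAbove)
      ≤ ∏ j, (∫⁻ y : Fin (n + 1) → ℝ, f j y ^ ((n + 1 : ℕ) : ℝ)) ^ (1 / ((n + 1 : ℕ) : ℝ)) := by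
  intro n
  induction n with
  | zero => exact lw_base
  | succ n IH =>
    intro f hf
    set p : ℝ := ((n + 1 + 1 : ℕ) : ℝ) with hp_def
    have hp1 : (1 : ℝ) < p := by
      rw [hp_def]; push_cast; have : (0:ℝ) ≤ n := Nat.cast_nonneg n; linarith
    have hp0 : (0 : ℝ) < p := lt_trans one_pos hp1
    set q : ℝ := p / (p - 1) with hq_def
    have hpq : p.HolderConjugate q := Real.HolderConjugate.conjExponent hp1
    have hq0 : 0 ≤ q := le_of_lt hpq.symm.pos
    have hsub : p - 1 = ((n + 1 : ℕ) : ℝ) := by rw [hp_def]; push_cast; ring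
    have hqn : q * ((n + 1 : ℕ) : ℝ) = p := by
      rw [hq_def, hsub.symm, div_mul_cancel₀]
      rw [hsub]; positivity
    -- abbreviations
    have hsnoc := lw_measurable_snoc (n + 1)
    set i₀ : Fin (n + 1 + 2) := Fin.last (n + 2) with hi₀
    have hg : ∀ (t : ℝ) (j' : Fin (n + 2)),
        Measurable (fun y : Fin (n + 1) → ℝ => f j'.castSucc (Fin.snoc y t)) := by
      intro t j'
      exact (hf _).comp (hsnoc.comp (measurable_const.prodMk measurable_id))
    have hcomp : ∀ j' : Fin (n + 2), Measurable (fun z : ℝ × (Fin (n + 2) → ℝ) =>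
        f j'.castSucc (Fin.snoc (z.2 ∘ j'.succAbove) z.1)) := by
      intro j'
      have h2 : Measurable fun z : ℝ × (Fin (n + 2) → ℝ) =>
          ((z.1, z.2 ∘ j'.succAbove) : ℝ × (Fin (n + 1) → ℝ)) := by
        refine measurable_fst.prodMk ?_
        rw [measurable_pi_iff]; intro k
        exact (measurable_pi_apply _).comp measurable_snd
      exact (hf _).comp (hsnoc.comp h2)
    set Φ : ℝ × (Fin (n + 2) → ℝ) → ℝ≥0∞ := fun z =>
      f i₀ z.2 * ∏ j' : Fin (n + 2), f j'.castSucc (Fin.snoc (z.2 ∘ j'.succAbove) z.1) with hΦ_def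
    have hΦ : Measurable Φ :=
      ((hf i₀).comp measurable_snd).mul (Finset.measurable_prod _ fun j' _ => hcomp j')
    -- Step A: rewrite integrand
    have stepA : ∀ x : Fin (n + 1 + 2) → ℝ,
        ∏ j, f j (x ∘ j.succAbove) = Φ (x i₀, x ∘ Fin.castSucc) := by
      intro x
      rw [Fin.prod_univ_castSucc, mul_comm, hΦ_def]
      congr 1
      · rw [Fin.succAbove_last]
      · refine Finset.prod_congr rfl fun j' _ => ?_
        rw [lw_comp_succAbove x j']
    simp_rw [stepA]
    -- Step B: move to the product measure
    have hmp := measurePreserving_piFinSuccAbove (fun _ : Fin (n + 1 + 2) => (volume : Measure ℝ)) i₀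
    have stepB : ∫⁻ x : Fin (n + 1 + 2) → ℝ, Φ (x i₀, x ∘ Fin.castSucc)
        = ∫⁻ z, Φ z ∂((volume : Measure ℝ).prod (Measure.pi fun _ : Fin (n + 2) => (volume : Measure ℝ))) := by
      rw [← hmp.lintegral_comp hΦ]
      refine lintegral_congr fun x => ?_
      have hx : (x ∘ Fin.castSucc) = Fin.removeNth i₀ x := by
        funext i; simp [Fin.removeNth, hi₀, Fin.succAbove_last]
      rw [hx]
      rfl
    rw [stepB, lintegral_prod _ hΦ.aemeasurable]
    -- notation for the inner quantities
    set C : ℝ≥0∞ := (∫⁻ x' : Fin (n + 2) → ℝ, f i₀ x' ^ p) ^ (1 / p) with hC_def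
    set F : Fin (n + 2) → ℝ → ℝ≥0∞ := fun j' t =>
      ∫⁻ y : Fin (n + 1) → ℝ, f j'.castSucc (Fin.snoc y t) ^ p with hF_def
    -- Step D : pointwise (in t) bound via Hölder + induction hypothesis
    have stepD : ∀ t : ℝ, ∫⁻ x' : Fin (n + 2) → ℝ, Φ (t, x')
        ≤ C * ∏ j' : Fin (n + 2), (F j' t) ^ (1 / p) := by
      intro t
      have hprodmeas : Measurable fun x' : Fin (n + 2) → ℝ =>
          ∏ j' : Fin (n + 2), f j'.castSucc (Fin.snoc (x' ∘ j'.succAbove) t) := by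
        refine Finset.measurable_prod _ fun j' _ => ?_
        exact (hcomp j').comp (measurable_const.prodMk measurable_id)
      calc ∫⁻ x' : Fin (n + 2) → ℝ, Φ (t, x')
          = ∫⁻ x' : Fin (n + 2) → ℝ,
              (f i₀ * fun x' => ∏ j' : Fin (n + 2), f j'.castSucc (Fin.snoc (x' ∘ j'.succAbove) t)) x' := by
            refine lintegral_congr fun x' => ?_; rfl
        _ ≤ (∫⁻ x', f i₀ x' ^ p) ^ (1 / p)
            * (∫⁻ x', (∏ j' : Fin (n + 2), f j'.castSucc (Fin.snoc (x' ∘ j'.succAbove) t)) ^ q) ^ (1 / q) :=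
            ENNReal.lintegral_mul_le_Lp_mul_Lq volume hpq (hf i₀).aemeasurable hprodmeas.aemeasurable
        _ ≤ C * (∏ j' : Fin (n + 2), (∫⁻ y : Fin (n + 1) → ℝ,
              (f j'.castSucc (Fin.snoc y t) ^ q) ^ ((n + 1 : ℕ) : ℝ)) ^ (1 / ((n + 1 : ℕ) : ℝ))) ^ (1 / q) := by
            rw [hC_def]
            gcongr
            have h3 : ∀ x' : Fin (n + 2) → ℝ,
                (∏ j' : Fin (n + 2), f j'.castSucc (Fin.snoc (x' ∘ j'.succAbove) t)) ^ q
                = ∏ j' : Fin (n + 2), f j'.castSucc (Fin.snoc (x' ∘ j'.succAbove) t) ^ q := by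
              intro x'
              exact (ENNReal.prod_rpow_of_nonneg hq0).symm
            simp_rw [h3]
            exact IH (fun j' y => f j'.castSucc (Fin.snoc y t) ^ q)
              (fun j' => (hg t j').pow_const q)
        _ = C * ∏ j' : Fin (n + 2), (F j' t) ^ (1 / p) := by
            congr 1
            rw [← ENNReal.prod_rpow_of_nonneg (by positivity : (0:ℝ) ≤ 1 / q)]
            refine Finset.prod_congr rfl fun j' _ => ?_
            have h1 : ∀ y : Fin (n + 1) → ℝ,
                (f j'.castSucc (Fin.snoc y t) ^ q) ^ ((n + 1 : ℕ) : ℝ)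
                  = f j'.castSucc (Fin.snoc y t) ^ p := by
              intro y
              rw [← ENNReal.rpow_mul, hqn]
            simp_rw [h1]
            rw [← ENNReal.rpow_mul, hF_def]
            congr 1
            rw [hq_def, hsub]
            field_simp
    calc ∫⁻ t : ℝ, ∫⁻ x' : Fin (n + 2) → ℝ, Φ (t, x')
        ≤ ∫⁻ t : ℝ, C * ∏ j' : Fin (n + 2), (F j' t) ^ (1 / p) := lintegral_mono stepD
      _ = C * ∫⁻ t : ℝ, ∏ j' : Fin (n + 2), (F j' t) ^ (1 / p) := by
          have hF : ∀ j', Measurable (F j') := by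
            intro j'
            exact Measurable.lintegral_prod_right' (((hf _).comp hsnoc).pow_const p)
          exact lintegral_const_mul _ (Finset.measurable_prod _ fun j' _ => (hF j').pow_const _)
      _ ≤ C * ∏ j' : Fin (n + 2), (∫⁻ t : ℝ, F j' t) ^ (1 / p) := by
          gcongr
          refine ENNReal.lintegral_prod_norm_pow_le Finset.univ
            (fun j' _ => ?_) ?_ (fun j' _ => by positivity)
          · exact (Measurable.lintegral_prod_right' (((hf _).comp hsnoc).pow_const p)).aemeasurable
          · rw [Finset.sum_const, Finset.card_univ, Fintype.card_fin, nsmul_eq_mul, hp_def]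
            field_simp
      _ = C * ∏ j' : Fin (n + 2), (∫⁻ x' : Fin (n + 2) → ℝ, f j'.castSucc x' ^ p) ^ (1 / p) := by
          congr 1
          refine Finset.prod_congr rfl fun j' _ => ?_
          congr 1
          have hψ : Measurable fun z : ℝ × (Fin (n + 1) → ℝ) => f j'.castSucc (Fin.snoc z.2 z.1) ^ p :=
            ((hf _).comp hsnoc).pow_const p
          have hmp' := measurePreserving_piFinSuccAbove
            (fun _ : Fin (n + 2) => (volume : Measure ℝ)) (Fin.last (n + 1))
          calc ∫⁻ t : ℝ, F j' t
              = ∫⁻ z : ℝ × (Fin (n + 1) → ℝ), f j'.castSucc (Fin.snoc z.2 z.1) ^ p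
                  ∂((volume : Measure ℝ).prod (Measure.pi fun _ : Fin (n + 1) => (volume : Measure ℝ))) :=
                (lintegral_prod _ hψ.aemeasurable).symm
            _ = ∫⁻ x' : Fin (n + 2) → ℝ, f j'.castSucc x' ^ p := by
                rw [← hmp'.lintegral_comp hψ]
                refine lintegral_congr fun x' => ?_
                show f j'.castSucc (Fin.snoc (Fin.removeNth (Fin.last (n+1)) x') (x' (Fin.last (n+1)))) ^ p = _
                rw [Fin.removeNth_last, Fin.snoc_init_self]
      _ = ∏ j, (∫⁻ y : Fin (n + 1 + 1) → ℝ, f j y ^ ((n + 1 + 1 : ℕ) : ℝ)) ^ (1 / ((n + 1 + 1 : ℕ) : ℝ)) := by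
          rw [hC_def, hi₀]
          conv_rhs => rw [Fin.prod_univ_castSucc]
          rw [mul_comm]

/-- The Loomis–Whitney inequality in `ℝ^{n+1}` (with `n + 1 ≥ 2`):
`∫ ∏_j f_j(x with j-th coordinate omitted) ≤ ∏_j ‖f_j‖_{L^n(ℝⁿ)}`. -/
theorem stmt19 (n : ℕ) (hn : 1 ≤ n)
    (f : Fin (n + 1) → ((Fin n → ℝ) → ℝ≥0∞)) (hf : ∀ j, Measurable (f j)) :
    ∫⁻ x : Fin (n + 1) → ℝ, ∏ j, f j (x ∘ j.succAbove)
      ≤ ∏ j, (∫⁻ y : Fin n → ℝ, f j y ^ (n : ℝ)) ^ (1 / (n : ℝ)) := by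
  cases n with
  | zero => omega
  | succ m => exact lw_aux m f hf
end
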